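/- arXiv:2402.03439 — 4 statements merged into one kernel-verified Lean document; each statement's English description precedes it below -/
import Mathlib

section
/- Let |φ⟩ be a pure state on A⊗B⊗C⊗E with I(A:E) = I(B:E) = I(C:E) = 0. Then the eigenvectors |φ_i⟩ (with distinct eigenvalues and chosen as a spectral decomposition) of the reduced state σ_{ABC} = Tr_E|φ⟩⟨φ| satisfy: for i ≠ j, Tr_B[|φ_i⟩⟨φ_i|] and Tr_B[|φ_j⟩⟨φ_j|] are supported on orthogonal subspaces of A⊗C. -/
open scoped Kronecker ComplexOrder
open Matrix

noncomputable def vN {n : Type*} [Fintype n] [DecidableEq n] (ρ : Matrix n n ℂ) : ℝ :=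
  if h : ρ.IsHermitian then ∑ i, Real.negMulLog (h.eigenvalues i) else 0

def IsDensity {n : Type*} [Fintype n] [DecidableEq n] (ρ : Matrix n n ℂ) : Prop :=
  ρ.PosSemidef ∧ ρ.trace = 1

noncomputable def pureDM {n : Type*} (ψ : n → ℂ) : Matrix n n ℂ :=
  Matrix.vecMulVec ψ (star ψ)

section tri

variable {a b c : Type*} [Fintype a] [Fintype b] [Fintype c]

noncomputable def rA (ρ : Matrix (a × b × c) (a × b × c) ℂ) : Matrix a a ℂ :=
  Matrix.of fun i j => ∑ y : b, ∑ z : c, ρ (i, y, z) (j, y, z)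

noncomputable def rB (ρ : Matrix (a × b × c) (a × b × c) ℂ) : Matrix b b ℂ :=
  Matrix.of fun i j => ∑ x : a, ∑ z : c, ρ (x, i, z) (x, j, z)

noncomputable def rC (ρ : Matrix (a × b × c) (a × b × c) ℂ) : Matrix c c ℂ :=
  Matrix.of fun i j => ∑ x : a, ∑ y : b, ρ (x, y, i) (x, y, j)

noncomputable def rAB (ρ : Matrix (a × b × c) (a × b × c) ℂ) : Matrix (a × b) (a × b) ℂ :=
  Matrix.of fun i j => ∑ z : c, ρ (i.1, i.2, z) (j.1, j.2, z)

noncomputable def rBC (ρ : Matrix (a × b × c) (a × b × c) ℂ) : Matrix (b × c) (b × c) ℂ :=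
  Matrix.of fun i j => ∑ x : a, ρ (x, i.1, i.2) (x, j.1, j.2)

noncomputable def rAC (ρ : Matrix (a × b × c) (a × b × c) ℂ) : Matrix (a × c) (a × c) ℂ :=
  Matrix.of fun i j => ∑ y : b, ρ (i.1, y, i.2) (j.1, y, j.2)

noncomputable def qCMI [DecidableEq a] [DecidableEq b] [DecidableEq c]
    (ρ : Matrix (a × b × c) (a × b × c) ℂ) : ℝ :=
  vN (rAB ρ) + vN (rBC ρ) - vN (rB ρ) - vN ρ

noncomputable def bOp [DecidableEq a] [DecidableEq c] (K : Matrix b b ℂ) :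
    Matrix (a × b × c) (a × b × c) ℂ :=
  (1 : Matrix a a ℂ) ⊗ₖ (K ⊗ₖ (1 : Matrix c c ℂ))

noncomputable def applyB [DecidableEq a] [DecidableEq c] {ι : Type*} [Fintype ι]
    (K : ι → Matrix b b ℂ) (ρ : Matrix (a × b × c) (a × b × c) ℂ) :
    Matrix (a × b × c) (a × b × c) ℂ :=
  ∑ i, bOp (a := a) (c := c) (K i) * ρ * (bOp (K i))ᴴ

end tri

section fourparty

variable {a b c e : Type*} [Fintype a] [Fintype b] [Fintype c] [Fintype e]

/-- Reduced state on `A ⊗ B ⊗ C` of a state on `A ⊗ B ⊗ C ⊗ E`. -/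
noncomputable def redABC (ρ : Matrix (a × b × c × e) (a × b × c × e) ℂ) :
    Matrix (a × b × c) (a × b × c) ℂ :=
  Matrix.of fun s t => ∑ w : e, ρ (s.1, s.2.1, s.2.2, w) (t.1, t.2.1, t.2.2, w)

/-- Reduced state on `E`. -/
noncomputable def redE (ρ : Matrix (a × b × c × e) (a × b × c × e) ℂ) : Matrix e e ℂ :=
  Matrix.of fun w w' => ∑ x : a, ∑ y : b, ∑ z : c, ρ (x, y, z, w) (x, y, z, w')

/-- Reduced state on `A ⊗ E`. -/
noncomputable def redAE (ρ : Matrix (a × b × c × e) (a × b × c × e) ℂ) :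
    Matrix (a × e) (a × e) ℂ :=
  Matrix.of fun s t => ∑ y : b, ∑ z : c, ρ (s.1, y, z, s.2) (t.1, y, z, t.2)

/-- Reduced state on `B ⊗ E`. -/
noncomputable def redBE (ρ : Matrix (a × b × c × e) (a × b × c × e) ℂ) :
    Matrix (b × e) (b × e) ℂ :=
  Matrix.of fun s t => ∑ x : a, ∑ z : c, ρ (x, s.1, z, s.2) (x, t.1, z, t.2)

/-- Reduced state on `C ⊗ E`. -/
noncomputable def redCE (ρ : Matrix (a × b × c × e) (a × b × c × e) ℂ) :
    Matrix (c × e) (c × e) ℂ :=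
  Matrix.of fun s t => ∑ x : a, ∑ y : b, ρ (x, y, s.1, s.2) (x, y, t.1, t.2)

end fourparty

lemma sum_eigen_eq_trace {n : Type*} [Fintype n] [DecidableEq n] {A : Matrix n n ℂ}
    (hA : A.IsHermitian) : ((∑ i, hA.eigenvalues i : ℝ) : ℂ) = A.trace := by
  conv_rhs => rw [hA.spectral_theorem]
  rw [Unitary.conjStarAlgAut_apply, Matrix.trace_mul_cycle]
  rw [show (star (hA.eigenvectorUnitary : Matrix n n ℂ))
      * (hA.eigenvectorUnitary : Matrix n n ℂ) = 1 from mem_unitaryGroup_iff'.mp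
      (hA.eigenvectorUnitary).2]
  rw [Matrix.one_mul, Matrix.trace_diagonal]
  push_cast
  rfl

lemma klein_term {p q t : ℝ} (hp : 0 ≤ p) (hq : 0 ≤ q) (ht : 0 ≤ t)
    (hker : q = 0 → p * t = 0) :
    t * (p - q) ≤ p * t * (Real.log p - Real.log q) := by
  rcases eq_or_lt_of_le hp with hp0 | hp0
  · simp only [← hp0, zero_mul, zero_sub, zero_mul]; nlinarith
  rcases eq_or_lt_of_le hq with hq0 | hq0
  · have := hker hq0.symm
    have ht0 : t = 0 := by nlinarith
    simp [ht0]
  have key : Real.log q - Real.log p ≤ q / p - 1 := by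
    have := Real.log_le_sub_one_of_pos (x := q / p) (by positivity)
    rwa [Real.log_div (ne_of_gt hq0) (ne_of_gt hp0)] at this
  have h2 : p * t * (Real.log q - Real.log p) ≤ p * t * (q / p - 1) :=
    mul_le_mul_of_nonneg_left key (by positivity)
  have h3 : p * t * (q / p - 1) = t * (q - p) := by field_simp
  nlinarith

lemma klein_term_eq {p q t : ℝ} (hp : 0 ≤ p) (hq : 0 ≤ q) (ht : 0 < t)
    (hker : q = 0 → p * t = 0)
    (heq : t * (p - q) = p * t * (Real.log p - Real.log q)) : p = q := by
  rcases eq_or_lt_of_le hp with hp0 | hp0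
  · simp only [← hp0, zero_mul, zero_sub, zero_mul] at heq ⊢
    have : t * -q = 0 := by linarith [heq]
    rcases mul_eq_zero.mp this with h | h
    · exact absurd h (ne_of_gt ht)
    · linarith
  rcases eq_or_lt_of_le hq with hq0 | hq0
  · exact absurd (hker hq0.symm) (by positivity)
  by_contra hne
  have key : Real.log q - Real.log p < q / p - 1 := by
    have := Real.log_lt_sub_one_of_pos (x := q / p) (by positivity)
      (by intro h; apply hne; field_simp at h; linarith)
    rwa [Real.log_div (ne_of_gt hq0) (ne_of_gt hp0)] at this
  have h2 : p * t * (Real.log q - Real.log p) < p * t * (q / p - 1) :=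
    mul_lt_mul_of_pos_left key (by positivity)
  have h3 : p * t * (q / p - 1) = t * (q - p) := by field_simp
  nlinarith

lemma klein_matrix {n : Type*} [Fintype n] [DecidableEq n]
    (U V : Matrix n n ℂ) (hU : Uᴴ * U = 1) (hU' : U * Uᴴ = 1)
    (hV : Vᴴ * V = 1) (hV' : V * Vᴴ = 1)
    (p q : n → ℝ) (hp : ∀ i, 0 ≤ p i) (hq : ∀ m, 0 ≤ q m)
    (hp1 : ∑ i, p i = 1) (hq1 : ∑ m, q m = 1)
    (hker : ∀ m, q m = 0 → ∑ i, p i * Complex.normSq ((Uᴴ * V) i m) = 0)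
    (hent : ∑ i, Real.negMulLog (p i)
      = -∑ m, (∑ i, p i * Complex.normSq ((Uᴴ * V) i m)) * Real.log (q m)) :
    U * Matrix.diagonal (fun i => (p i : ℂ)) * Uᴴ
      = V * Matrix.diagonal (fun m => (q m : ℂ)) * Vᴴ := by
  set W : Matrix n n ℂ := Uᴴ * V with hWdef
  have hPnn : ∀ i m, (0:ℝ) ≤ Complex.normSq (W i m) := fun i m => Complex.normSq_nonneg _
  have hWW' : W * Wᴴ = 1 := by
    rw [hWdef, conjTranspose_mul, conjTranspose_conjTranspose, mul_assoc,
      ← mul_assoc V, hV', one_mul, hU]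
  have hW'W : Wᴴ * W = 1 := by
    rw [hWdef, conjTranspose_mul, conjTranspose_conjTranspose, mul_assoc,
      ← mul_assoc U, hU', one_mul, hV]
  have hrow : ∀ i, ∑ m, Complex.normSq (W i m) = 1 := by
    intro i
    have h1 : (W * Wᴴ) i i = 1 := by rw [hWW']; simp
    rw [mul_apply] at h1
    have h2 : ∀ m, W i m * Wᴴ m i = (Complex.normSq (W i m) : ℂ) := by
      intro m; rw [conjTranspose_apply]; exact Complex.mul_conj _
    rw [Finset.sum_congr rfl (fun m _ => h2 m)] at h1
    exact_mod_cast h1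
  have hcol : ∀ m, ∑ i, Complex.normSq (W i m) = 1 := by
    intro m
    have h1 : (Wᴴ * W) m m = 1 := by rw [hW'W]; simp
    rw [mul_apply] at h1
    have h2 : ∀ i, Wᴴ m i * W i m = (Complex.normSq (W i m) : ℂ) := by
      intro i; rw [conjTranspose_apply, mul_comm]; exact Complex.mul_conj _
    rw [Finset.sum_congr rfl (fun i _ => h2 i)] at h1
    exact_mod_cast h1
  have hker' : ∀ i m, q m = 0 → p i * Complex.normSq (W i m) = 0 := by
    intro i m hm
    have h0 := hker m hm
    have hnn : ∀ j ∈ Finset.univ, (0:ℝ) ≤ p j * Complex.normSq (W j m) :=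
      fun j _ => mul_nonneg (hp j) (hPnn j m)
    exact (Finset.sum_eq_zero_iff_of_nonneg hnn).mp h0 i (Finset.mem_univ i)
  have hterm : ∀ i m, Complex.normSq (W i m) * (p i - q m)
      ≤ p i * Complex.normSq (W i m) * (Real.log (p i) - Real.log (q m)) :=
    fun i m => klein_term (hp i) (hq m) (hPnn i m) (hker' i m)
  have hsumR : ∑ i, ∑ m, Complex.normSq (W i m) * (p i - q m) = 0 := by
    have e1 : ∀ i, ∑ m, Complex.normSq (W i m) * (p i - q m)
        = p i - ∑ m, Complex.normSq (W i m) * q m := by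
      intro i
      simp only [mul_sub]
      rw [Finset.sum_sub_distrib, ← Finset.sum_mul, hrow i, one_mul]
    rw [Finset.sum_congr rfl (fun i _ => e1 i), Finset.sum_sub_distrib, hp1, Finset.sum_comm]
    have e2 : ∀ m, ∑ i, Complex.normSq (W i m) * q m = q m := by
      intro m; rw [← Finset.sum_mul, hcol m, one_mul]
    rw [Finset.sum_congr rfl (fun m _ => e2 m), hq1, sub_self]
  have hsumL : ∑ i, ∑ m, p i * Complex.normSq (W i m) * (Real.log (p i) - Real.log (q m)) = 0 := by
    have e1 : ∀ i, ∑ m, p i * Complex.normSq (W i m) * (Real.log (p i) - Real.log (q m))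
        = p i * Real.log (p i) - ∑ m, p i * Complex.normSq (W i m) * Real.log (q m) := by
      intro i
      simp only [mul_sub]
      rw [Finset.sum_sub_distrib]
      congr 1
      rw [← Finset.sum_mul, ← Finset.mul_sum, hrow i, mul_one]
    rw [Finset.sum_congr rfl (fun i _ => e1 i), Finset.sum_sub_distrib, Finset.sum_comm]
    have hent2 : ∑ i, p i * Real.log (p i)
        = ∑ m, (∑ i, p i * Complex.normSq (W i m)) * Real.log (q m) := by
      have h3 : ∑ i, Real.negMulLog (p i) = -∑ i, p i * Real.log (p i) := by
        simp [Real.negMulLog, Finset.sum_neg_distrib]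
      rw [h3] at hent
      have := neg_injective hent
      linarith [this]
    rw [hent2]
    rw [Finset.sum_congr rfl (fun m _ => (Finset.sum_mul _ _ _).symm)]
    simp
  have h0 : ∑ x : n × n, (p x.1 * Complex.normSq (W x.1 x.2)
        * (Real.log (p x.1) - Real.log (q x.2))
      - Complex.normSq (W x.1 x.2) * (p x.1 - q x.2)) = 0 := by
    rw [Fintype.sum_prod_type]
    rw [Finset.sum_congr rfl (fun i _ => Finset.sum_sub_distrib _ _),
      Finset.sum_sub_distrib, hsumL, hsumR, sub_self]
  have heach := (Finset.sum_eq_zero_iff_of_nonneg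
    (fun x _ => sub_nonneg.mpr (hterm x.1 x.2))).mp h0
  have hDW : ∀ i m, (p i : ℂ) * W i m = W i m * (q m : ℂ) := by
    intro i m
    by_cases hw : W i m = 0
    · simp [hw]
    · have hP0 : 0 < Complex.normSq (W i m) := Complex.normSq_pos.mpr hw
      have he := heach (i, m) (Finset.mem_univ _)
      have hpq : p i = q m := klein_term_eq (hp i) (hq m) hP0 (hker' i m) (by linarith)
      rw [hpq, mul_comm]
  have hDWmat : Matrix.diagonal (fun i => (p i : ℂ)) * W
      = W * Matrix.diagonal (fun m => (q m : ℂ)) := by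
    ext i m
    rw [diagonal_mul, mul_diagonal]
    exact hDW i m
  have step1 : U * Matrix.diagonal (fun i => (p i : ℂ)) * Uᴴ
      = U * (Matrix.diagonal (fun i => (p i : ℂ)) * W) * Vᴴ := by
    rw [hWdef]
    simp only [Matrix.mul_assoc, hV', Matrix.mul_one]
  rw [step1, hDWmat, hWdef]
  simp only [← Matrix.mul_assoc]
  rw [hU', Matrix.one_mul]
open Matrix

lemma kron_conjT {m n p q : Type*} [Fintype m] [Fintype n] [Fintype p] [Fintype q]
    (A : Matrix m n ℂ) (B : Matrix p q ℂ) : (A ⊗ₖ B)ᴴ = Aᴴ ⊗ₖ Bᴴ := by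
  ext ⟨i, j⟩ ⟨k, l⟩
  simp [conjTranspose_apply, mul_comm]

lemma sandwich_fst {b e : Type*} [Fintype b] [Fintype e] [DecidableEq b] [DecidableEq e]
    (M : Matrix (b × e) (b × e) ℂ) (X : Matrix b b ℂ) (Y : Matrix e e ℂ)
    (hY : Y * Yᴴ = 1) (j : b) :
    ∑ k, ((X ⊗ₖ Y)ᴴ * M * (X ⊗ₖ Y)) (j, k) (j, k)
      = (Xᴴ * (Matrix.of fun y y' => ∑ w, M (y, w) (y', w)) * X) j j := by
  have hYd : ∀ w w' : e, (∑ k, Y w' k * star (Y w k)) = if w' = w then 1 else 0 := by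
    intro w w'
    have : (Y * Yᴴ) w' w = (1 : Matrix e e ℂ) w' w := by rw [hY]
    simpa [mul_apply, conjTranspose_apply, one_apply] using this
  have lhs_eq : ∀ k, ((X ⊗ₖ Y)ᴴ * M * (X ⊗ₖ Y)) (j, k) (j, k)
      = ∑ s : b × e, ∑ t : b × e,
          star (X s.1 j) * star (Y s.2 k) * M s t * (X t.1 j * Y t.2 k) := by
    intro k
    rw [mul_apply]
    rw [Finset.sum_congr rfl fun t _ => by rw [mul_apply, Finset.sum_mul]]
    rw [Finset.sum_comm]
    refine Finset.sum_congr rfl fun s _ => Finset.sum_congr rfl fun t _ => ?_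
    simp [conjTranspose_apply, kroneckerMap_apply, star_mul']
    
  have inner_eq : ∀ s t : b × e,
      (∑ k, star (X s.1 j) * star (Y s.2 k) * M s t * (X t.1 j * Y t.2 k))
      = star (X s.1 j) * M s t * X t.1 j * (if t.2 = s.2 then 1 else 0) := by
    intro s t
    rw [← hYd s.2 t.2, Finset.mul_sum]
    exact Finset.sum_congr rfl fun k _ => by ring
  have rhs_eq : (Xᴴ * (Matrix.of fun y y' => ∑ w, M (y, w) (y', w)) * X) j j
      = ∑ y' : b, ∑ y : b, ∑ w : e, star (X y j) * M (y, w) (y', w) * X y' j := by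
    rw [mul_apply]
    refine Finset.sum_congr rfl fun y' _ => ?_
    rw [mul_apply, Finset.sum_mul]
    refine Finset.sum_congr rfl fun y _ => ?_
    simp only [conjTranspose_apply, of_apply]
    rw [Finset.mul_sum, Finset.sum_mul]
    
  calc ∑ k, ((X ⊗ₖ Y)ᴴ * M * (X ⊗ₖ Y)) (j, k) (j, k)
      = ∑ s : b × e, ∑ t : b × e, star (X s.1 j) * M s t * X t.1 j
          * (if t.2 = s.2 then 1 else 0) := by
        rw [Finset.sum_congr rfl fun k _ => lhs_eq k, Finset.sum_comm]
        refine Finset.sum_congr rfl fun s _ => ?_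
        rw [Finset.sum_comm]
        exact Finset.sum_congr rfl fun t _ => inner_eq s t
    _ = ∑ s : b × e, ∑ y' : b, star (X s.1 j) * M s (y', s.2) * X y' j := by
        refine Finset.sum_congr rfl fun s _ => ?_
        rw [Fintype.sum_prod_type]
        refine Finset.sum_congr rfl fun y' _ => ?_
        simp [mul_ite, mul_one, mul_zero, Finset.sum_ite_eq', Finset.mem_univ]
    _ = (Xᴴ * (Matrix.of fun y y' => ∑ w, M (y, w) (y', w)) * X) j j := by
        rw [rhs_eq, Finset.sum_comm]
        refine Finset.sum_congr rfl fun y' _ => ?_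
        rw [Fintype.sum_prod_type]

lemma sandwich_snd {b e : Type*} [Fintype b] [Fintype e] [DecidableEq b] [DecidableEq e]
    (M : Matrix (b × e) (b × e) ℂ) (X : Matrix b b ℂ) (Y : Matrix e e ℂ)
    (hX : X * Xᴴ = 1) (k : e) :
    ∑ j, ((X ⊗ₖ Y)ᴴ * M * (X ⊗ₖ Y)) (j, k) (j, k)
      = (Yᴴ * (Matrix.of fun w w' => ∑ y, M (y, w) (y, w')) * Y) k k := by
  have hXd : ∀ y y' : b, (∑ j, X y' j * star (X y j)) = if y' = y then 1 else 0 := by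
    intro y y'
    have : (X * Xᴴ) y' y = (1 : Matrix b b ℂ) y' y := by rw [hX]
    simpa [mul_apply, conjTranspose_apply, one_apply] using this
  have lhs_eq : ∀ j, ((X ⊗ₖ Y)ᴴ * M * (X ⊗ₖ Y)) (j, k) (j, k)
      = ∑ s : b × e, ∑ t : b × e,
          star (X s.1 j) * star (Y s.2 k) * M s t * (X t.1 j * Y t.2 k) := by
    intro j
    rw [mul_apply]
    rw [Finset.sum_congr rfl fun t _ => by rw [mul_apply, Finset.sum_mul]]
    rw [Finset.sum_comm]
    refine Finset.sum_congr rfl fun s _ => Finset.sum_congr rfl fun t _ => ?_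
    simp [conjTranspose_apply, kroneckerMap_apply, star_mul']
    
  have inner_eq : ∀ s t : b × e,
      (∑ j, star (X s.1 j) * star (Y s.2 k) * M s t * (X t.1 j * Y t.2 k))
      = star (Y s.2 k) * M s t * Y t.2 k * (if t.1 = s.1 then 1 else 0) := by
    intro s t
    rw [← hXd s.1 t.1, Finset.mul_sum]
    exact Finset.sum_congr rfl fun j _ => by ring
  have rhs_eq : (Yᴴ * (Matrix.of fun w w' => ∑ y, M (y, w) (y, w')) * Y) k k
      = ∑ w' : e, ∑ w : e, ∑ y : b, star (Y w k) * M (y, w) (y, w') * Y w' k := by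
    rw [mul_apply]
    refine Finset.sum_congr rfl fun w' _ => ?_
    rw [mul_apply, Finset.sum_mul]
    refine Finset.sum_congr rfl fun w _ => ?_
    simp only [conjTranspose_apply, of_apply]
    rw [Finset.mul_sum, Finset.sum_mul]
    
  calc ∑ j, ((X ⊗ₖ Y)ᴴ * M * (X ⊗ₖ Y)) (j, k) (j, k)
      = ∑ s : b × e, ∑ t : b × e, star (Y s.2 k) * M s t * Y t.2 k
          * (if t.1 = s.1 then 1 else 0) := by
        rw [Finset.sum_congr rfl fun j _ => lhs_eq j, Finset.sum_comm]
        refine Finset.sum_congr rfl fun s _ => ?_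
        rw [Finset.sum_comm]
        exact Finset.sum_congr rfl fun t _ => inner_eq s t
    _ = ∑ s : b × e, ∑ w' : e, star (Y s.2 k) * M s (s.1, w') * Y w' k := by
        refine Finset.sum_congr rfl fun s _ => ?_
        rw [Fintype.sum_prod_type]
        rw [Finset.sum_comm]
        refine Finset.sum_congr rfl fun w' _ => ?_
        simp [mul_ite, mul_one, mul_zero, Finset.sum_ite_eq', Finset.mem_univ]
    _ = (Yᴴ * (Matrix.of fun w w' => ∑ y, M (y, w) (y, w')) * Y) k k := by
        rw [rhs_eq]
        rw [show (∑ s : b × e, ∑ w' : e, star (Y s.2 k) * M s (s.1, w') * Y w' k)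
            = ∑ w' : e, ∑ s : b × e, star (Y s.2 k) * M s (s.1, w') * Y w' k from
          Finset.sum_comm]
        refine Finset.sum_congr rfl fun w' _ => ?_
        rw [Fintype.sum_prod_type, Finset.sum_comm]
theorem prodBE {a b c e : Type*} [Fintype a] [Fintype b] [Fintype c] [Fintype e]
    [DecidableEq b] [DecidableEq e]
    (φ : a × b × c × e → ℂ) (hφ : ∑ q, Complex.normSq (φ q) = 1)
    (hBE : vN (rB (redABC (pureDM φ))) + vN (redE (pureDM φ)) = vN (redBE (pureDM φ))) :
    redBE (pureDM φ) = (rB (redABC (pureDM φ))) ⊗ₖ (redE (pureDM φ)) := by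
  set ρ := redBE (pureDM φ) with hρdef
  set ρB := rB (redABC (pureDM φ)) with hρBdef
  set ρE := redE (pureDM φ) with hρEdef
  have hρa : ∀ (y : b) (w : e) (y' : b) (w' : e),
      ρ (y,w) (y',w') = ∑ x, ∑ z, φ (x,y,z,w) * star (φ (x,y',z,w')) := by
    intro y w y' w'
    simp [hρdef, redBE, pureDM, Matrix.vecMulVec_apply]
  have hρBa : ∀ y y', ρB y y' = ∑ x, ∑ z, ∑ w, φ (x,y,z,w) * star (φ (x,y',z,w)) := by
    intro y y'
    simp [hρBdef, rB, redABC, pureDM, Matrix.vecMulVec_apply]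
  have hρEa : ∀ w w', ρE w w' = ∑ x, ∑ y, ∑ z, φ (x,y,z,w) * star (φ (x,y,z,w')) := by
    intro w w'
    simp [hρEdef, redE, pureDM, Matrix.vecMulVec_apply]
  have hρpsd : ρ.PosSemidef := by
    have h : ρ = (Matrix.of fun (s : b × e) (t : a × c) => φ (t.1, s.1, t.2, s.2))
        * (Matrix.of fun (s : b × e) (t : a × c) => φ (t.1, s.1, t.2, s.2))ᴴ := by
      ext ⟨y, w⟩ ⟨y', w'⟩
      rw [hρa y w y' w', Matrix.mul_apply, Fintype.sum_prod_type]
      simp [Matrix.conjTranspose_apply]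
    rw [h]; exact Matrix.posSemidef_self_mul_conjTranspose _
  have hρBpsd : ρB.PosSemidef := by
    have h : ρB = (Matrix.of fun (s : b) (t : a × c × e) => φ (t.1, s, t.2.1, t.2.2))
        * (Matrix.of fun (s : b) (t : a × c × e) => φ (t.1, s, t.2.1, t.2.2))ᴴ := by
      ext y y'
      rw [hρBa y y', Matrix.mul_apply, Fintype.sum_prod_type]
      simp [Matrix.conjTranspose_apply, Fintype.sum_prod_type]
    rw [h]; exact Matrix.posSemidef_self_mul_conjTranspose _
  have hρEpsd : ρE.PosSemidef := by
    have h : ρE = (Matrix.of fun (s : e) (t : a × b × c) => φ (t.1, t.2.1, t.2.2, s))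
        * (Matrix.of fun (s : e) (t : a × b × c) => φ (t.1, t.2.1, t.2.2, s))ᴴ := by
      ext w w'
      rw [hρEa w w', Matrix.mul_apply, Fintype.sum_prod_type]
      simp [Matrix.conjTranspose_apply, Fintype.sum_prod_type]
    rw [h]; exact Matrix.posSemidef_self_mul_conjTranspose _
  have hρh : ρ.IsHermitian := hρpsd.1
  have hBh : ρB.IsHermitian := hρBpsd.1
  have hEh : ρE.IsHermitian := hρEpsd.1
  have hφ4 : ∑ x, ∑ y, ∑ z, ∑ w, Complex.normSq (φ (x,y,z,w)) = 1 := by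
    simpa [Fintype.sum_prod_type] using hφ
  have hterm1 : ∀ (x : a) (y : b) (z : c) (w : e),
      φ (x,y,z,w) * star (φ (x,y,z,w)) = ((Complex.normSq (φ (x,y,z,w)) : ℝ) : ℂ) := by
    intro x y z w
    rw [Complex.star_def, Complex.mul_conj]
  have htrρB : ∑ j, hBh.eigenvalues j = 1 := by
    have h1 : ρB.trace = 1 := by
      have h2 : ∀ y, ρB y y = ((∑ x, ∑ z, ∑ w, Complex.normSq (φ (x,y,z,w)) : ℝ) : ℂ) := by
        intro y
        rw [hρBa y y]
        push_cast
        exact Finset.sum_congr rfl fun x _ => Finset.sum_congr rfl fun z _ =>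
          Finset.sum_congr rfl fun w _ => hterm1 x y z w
      have h3 : ρB.trace = ∑ y, ρB y y := rfl
      rw [h3, Finset.sum_congr rfl fun y _ => h2 y]
      push_cast
      have h4 : ∑ y, ∑ x, ∑ z, ∑ w : e, (Complex.normSq (φ (x,y,z,w)) : ℂ)
          = ∑ x, ∑ y, ∑ z, ∑ w : e, (Complex.normSq (φ (x,y,z,w)) : ℂ) := Finset.sum_comm
      rw [h4]
      exact_mod_cast congrArg (Complex.ofReal) hφ4
    have h2 := sum_eigen_eq_trace hBh
    rw [h1] at h2
    exact_mod_cast h2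
  have htrρE : ∑ k, hEh.eigenvalues k = 1 := by
    have h1 : ρE.trace = 1 := by
      have h2 : ∀ w, ρE w w = ((∑ x, ∑ y, ∑ z, Complex.normSq (φ (x,y,z,w)) : ℝ) : ℂ) := by
        intro w
        rw [hρEa w w]
        push_cast
        exact Finset.sum_congr rfl fun x _ => Finset.sum_congr rfl fun y _ =>
          Finset.sum_congr rfl fun z _ => hterm1 x y z w
      have h3 : ρE.trace = ∑ w, ρE w w := rfl
      rw [h3, Finset.sum_congr rfl fun w _ => h2 w]
      push_cast
      have h4 : ∑ w, ∑ x, ∑ y, ∑ z, (Complex.normSq (φ (x,y,z,w)) : ℂ)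
          = ∑ x, ∑ y, ∑ z, ∑ w, (Complex.normSq (φ (x,y,z,w)) : ℂ) := by
        rw [Finset.sum_comm]
        refine Finset.sum_congr rfl fun x _ => ?_
        rw [Finset.sum_comm]
        refine Finset.sum_congr rfl fun y _ => ?_
        rw [Finset.sum_comm]
      rw [h4]
      exact_mod_cast congrArg (Complex.ofReal) hφ4
    have h2 := sum_eigen_eq_trace hEh
    rw [h1] at h2
    exact_mod_cast h2
  have htrρ : ∑ i, hρh.eigenvalues i = 1 := by
    have h1 : ρ.trace = 1 := by
      have h2 : ∀ (y : b) (w : e), ρ (y,w) (y,w)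
          = ((∑ x, ∑ z, Complex.normSq (φ (x,y,z,w)) : ℝ) : ℂ) := by
        intro y w
        rw [hρa y w y w]
        push_cast
        exact Finset.sum_congr rfl fun x _ => Finset.sum_congr rfl fun z _ => hterm1 x y z w
      have h3 : ρ.trace = ∑ y, ∑ w, ρ (y,w) (y,w) := by
        rw [show ρ.trace = ∑ s : b × e, ρ s s from rfl, Fintype.sum_prod_type]
      rw [h3, Finset.sum_congr rfl fun y _ =>
        Finset.sum_congr rfl fun w _ => h2 y w]
      push_cast
      have h4 : ∑ y, ∑ w, ∑ x, ∑ z, (Complex.normSq (φ (x,y,z,w)) : ℂ)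
          = ∑ x, ∑ y, ∑ z, ∑ w, (Complex.normSq (φ (x,y,z,w)) : ℂ) := by
        have s1 : ∀ y : b, ∑ w : e, ∑ x : a, ∑ z : c, (Complex.normSq (φ (x,y,z,w)) : ℂ)
            = ∑ x : a, ∑ z : c, ∑ w : e, (Complex.normSq (φ (x,y,z,w)) : ℂ) := by
          intro y
          rw [Finset.sum_comm]
          exact Finset.sum_congr rfl fun x _ => Finset.sum_comm
        rw [Finset.sum_congr rfl fun y _ => s1 y, Finset.sum_comm]
      rw [h4]
      exact_mod_cast congrArg (Complex.ofReal) hφ4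
    have h2 := sum_eigen_eq_trace hρh
    rw [h1] at h2
    exact_mod_cast h2
  set U : Matrix (b × e) (b × e) ℂ := (hρh.eigenvectorUnitary : Matrix (b × e) (b × e) ℂ)
    with hUdef
  set UB : Matrix b b ℂ := (hBh.eigenvectorUnitary : Matrix b b ℂ) with hUBdef
  set UE : Matrix e e ℂ := (hEh.eigenvectorUnitary : Matrix e e ℂ) with hUEdef
  have hU1 : Uᴴ * U = 1 := mem_unitaryGroup_iff'.mp (hρh.eigenvectorUnitary).2
  have hU1' : U * Uᴴ = 1 := mem_unitaryGroup_iff.mp (hρh.eigenvectorUnitary).2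
  have hUB1 : UBᴴ * UB = 1 := mem_unitaryGroup_iff'.mp (hBh.eigenvectorUnitary).2
  have hUB1' : UB * UBᴴ = 1 := mem_unitaryGroup_iff.mp (hBh.eigenvectorUnitary).2
  have hUE1 : UEᴴ * UE = 1 := mem_unitaryGroup_iff'.mp (hEh.eigenvectorUnitary).2
  have hUE1' : UE * UEᴴ = 1 := mem_unitaryGroup_iff.mp (hEh.eigenvectorUnitary).2
  set V : Matrix (b × e) (b × e) ℂ := UB ⊗ₖ UE with hVdef
  have hV1 : Vᴴ * V = 1 := by
    rw [hVdef, kron_conjT, ← Matrix.mul_kronecker_mul, hUB1, hUE1, Matrix.one_kronecker_one]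
  have hV1' : V * Vᴴ = 1 := by
    rw [hVdef, kron_conjT, ← Matrix.mul_kronecker_mul, hUB1', hUE1', Matrix.one_kronecker_one]
  set p : b × e → ℝ := hρh.eigenvalues with hpdef
  set pB : b → ℝ := hBh.eigenvalues with hpBdef
  set pE : e → ℝ := hEh.eigenvalues with hpEdef
  set qv : b × e → ℝ := fun m => pB m.1 * pE m.2 with hqvdef
  have hspec : ρ = U * Matrix.diagonal (fun i => (p i : ℂ)) * Uᴴ := hρh.spectral_theorem
  have hspecB : ρB = UB * Matrix.diagonal (fun j => (pB j : ℂ)) * UBᴴ := hBh.spectral_theorem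
  have hspecE : ρE = UE * Matrix.diagonal (fun k => (pE k : ℂ)) * UEᴴ := hEh.spectral_theorem
  have hdiagB : UBᴴ * ρB * UB = Matrix.diagonal (fun j => (pB j : ℂ)) :=
    by have h := hBh.conjStarAlgAut_star_eigenvectorUnitary; rw [Unitary.conjStarAlgAut_star_apply] at h; exact h
  have hdiagE : UEᴴ * ρE * UE = Matrix.diagonal (fun k => (pE k : ℂ)) :=
    by have h := hEh.conjStarAlgAut_star_eigenvectorUnitary; rw [Unitary.conjStarAlgAut_star_apply] at h; exact h
  set W : Matrix (b × e) (b × e) ℂ := Uᴴ * V with hWdef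
  set t : b × e → ℝ := fun m => ∑ i, p i * Complex.normSq (W i m) with htdef
  have hsand : ∀ m, (Vᴴ * ρ * V) m m = ((t m : ℝ) : ℂ) := by
    intro m
    have h1 : Vᴴ * ρ * V = Wᴴ * Matrix.diagonal (fun i => (p i : ℂ)) * W := by
      rw [hspec, hWdef, conjTranspose_mul, conjTranspose_conjTranspose]
      simp only [Matrix.mul_assoc]
    rw [h1, Matrix.mul_apply]
    have h2 : ∀ i, (Wᴴ * Matrix.diagonal (fun i => (p i : ℂ))) m i * W i m
        = ((p i * Complex.normSq (W i m) : ℝ) : ℂ) := by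
      intro i
      rw [Matrix.mul_diagonal, Matrix.conjTranspose_apply]
      rw [show star (W i m) * (p i : ℂ) * W i m
          = (p i : ℂ) * (W i m * star (W i m)) from by ring]
      rw [Complex.star_def, Complex.mul_conj]
      push_cast
      ring
    rw [Finset.sum_congr rfl fun i _ => h2 i, htdef]
    push_cast
    rfl
  have hNB : (Matrix.of fun y y' => ∑ w, ρ (y,w) (y',w)) = ρB := by
    ext y y'
    rw [Matrix.of_apply, hρBa y y', Finset.sum_congr rfl fun w _ => hρa y w y' w]
    rw [Finset.sum_comm]
    exact Finset.sum_congr rfl fun x _ => Finset.sum_comm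
  have hNE : (Matrix.of fun w w' => ∑ y, ρ (y,w) (y,w')) = ρE := by
    ext w w'
    rw [Matrix.of_apply, hρEa w w', Finset.sum_congr rfl fun y _ => hρa y w y w']
    rw [Finset.sum_comm]
  have htJ : ∀ j, ∑ k, t (j,k) = pB j := by
    intro j
    have h1 := sandwich_fst ρ UB UE hUE1' j
    rw [hNB, hdiagB] at h1
    have h2 : ∑ k, ((UB ⊗ₖ UE)ᴴ * ρ * (UB ⊗ₖ UE)) (j,k) (j,k) = ((∑ k, t (j,k) : ℝ) : ℂ) := by
      rw [Finset.sum_congr rfl fun k _ => hsand (j,k)]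
      push_cast
      rfl
    rw [h2, Matrix.diagonal_apply_eq] at h1
    exact_mod_cast h1
  have htK : ∀ k, ∑ j, t (j,k) = pE k := by
    intro k
    have h1 := sandwich_snd ρ UB UE hUB1' k
    rw [hNE, hdiagE] at h1
    have h2 : ∑ j, ((UB ⊗ₖ UE)ᴴ * ρ * (UB ⊗ₖ UE)) (j,k) (j,k) = ((∑ j, t (j,k) : ℝ) : ℂ) := by
      rw [Finset.sum_congr rfl fun j _ => hsand (j,k)]
      push_cast
      rfl
    rw [h2, Matrix.diagonal_apply_eq] at h1
    exact_mod_cast h1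
  have hpnn : ∀ i, 0 ≤ p i := fun i => hρpsd.eigenvalues_nonneg i
  have hpBnn : ∀ j, 0 ≤ pB j := fun j => hρBpsd.eigenvalues_nonneg j
  have hpEnn : ∀ k, 0 ≤ pE k := fun k => hρEpsd.eigenvalues_nonneg k
  have hqnn : ∀ m, 0 ≤ qv m := fun m => mul_nonneg (hpBnn m.1) (hpEnn m.2)
  have htnn : ∀ m, 0 ≤ t m := by
    intro m
    rw [htdef]
    exact Finset.sum_nonneg fun i _ => mul_nonneg (hpnn i) (Complex.normSq_nonneg _)
  have htB0 : ∀ j k, pB j = 0 → t (j,k) = 0 := by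
    intro j k hj
    have h1 : ∑ k', t (j,k') = 0 := by rw [htJ j, hj]
    exact (Finset.sum_eq_zero_iff_of_nonneg fun k' _ => htnn (j,k')).mp h1 k (Finset.mem_univ k)
  have htE0 : ∀ j k, pE k = 0 → t (j,k) = 0 := by
    intro j k hk
    have h1 : ∑ j', t (j',k) = 0 := by rw [htK k, hk]
    exact (Finset.sum_eq_zero_iff_of_nonneg fun j' _ => htnn (j',k)).mp h1 j (Finset.mem_univ j)
  have hq1 : ∑ m, qv m = 1 := by
    rw [hqvdef, Fintype.sum_prod_type]
    have h1 : ∀ j, ∑ k, pB j * pE k = pB j := by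
      intro j
      rw [← Finset.mul_sum, htrρE, mul_one]
    rw [Finset.sum_congr rfl fun j _ => h1 j, htrρB]
  have hvNρ : vN ρ = ∑ i, Real.negMulLog (p i) := by
    rw [vN, dif_pos hρh]
  have hvNρB : vN ρB = ∑ j, Real.negMulLog (pB j) := by
    rw [vN, dif_pos hBh]
  have hvNρE : vN ρE = ∑ k, Real.negMulLog (pE k) := by
    rw [vN, dif_pos hEh]
  have hent : ∑ i, Real.negMulLog (p i) = -∑ m, t m * Real.log (qv m) := by
    have e1 : ∀ m : b × e, t m * Real.log (qv m)
        = t m * Real.log (pB m.1) + t m * Real.log (pE m.2) := by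
      intro m
      by_cases h1 : pB m.1 = 0
      · rw [htB0 m.1 m.2 h1]; ring
      by_cases h2 : pE m.2 = 0
      · rw [htE0 m.1 m.2 h2]; ring
      rw [hqvdef, Real.log_mul h1 h2]
      ring
    have e2 : ∑ m : b × e, t m * Real.log (qv m)
        = ∑ j, (∑ k, t (j,k)) * Real.log (pB j) + ∑ k, (∑ j, t (j,k)) * Real.log (pE k) := by
      rw [Finset.sum_congr rfl fun m _ => e1 m, Finset.sum_add_distrib,
        Fintype.sum_prod_type, Fintype.sum_prod_type]
      congr 1
      · exact Finset.sum_congr rfl fun j _ => by rw [Finset.sum_mul]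
      · rw [Finset.sum_comm]
        exact Finset.sum_congr rfl fun k _ => by rw [Finset.sum_mul]
    have e3a : ∑ j, (∑ k, t (j,k)) * Real.log (pB j) = ∑ j, pB j * Real.log (pB j) :=
      Finset.sum_congr rfl fun j _ => by rw [htJ j]
    have e3b : ∑ k, (∑ j, t (j,k)) * Real.log (pE k) = ∑ k, pE k * Real.log (pE k) :=
      Finset.sum_congr rfl fun k _ => by rw [htK k]
    have e3 : ∑ m : b × e, t m * Real.log (qv m) = -(vN ρB) - vN ρE := by
      rw [e2, e3a, e3b, hvNρB, hvNρE]
      simp only [Real.negMulLog, Finset.sum_neg_distrib, neg_mul]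
      ring
    rw [e3, ← hvNρ, ← hBE]
    ring
  have hker : ∀ m, qv m = 0 → ∑ i, p i * Complex.normSq ((Uᴴ * V) i m) = 0 := by
    intro m hm
    have : t m = 0 := by
      rcases mul_eq_zero.mp hm with h | h
      · exact htB0 m.1 m.2 (by rcases m with ⟨j,k⟩; exact h)
      · exact htE0 m.1 m.2 (by rcases m with ⟨j,k⟩; exact h)
    rw [htdef] at this
    exact this
  have hent' : ∑ i, Real.negMulLog (p i)
      = -∑ m, (∑ i, p i * Complex.normSq ((Uᴴ * V) i m)) * Real.log (qv m) := by
    rw [hent]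
    
  have key := klein_matrix U V hU1 hU1' hV1 hV1' p qv hpnn hqnn htrρ hq1 hker hent'
  calc ρ = U * Matrix.diagonal (fun i => (p i : ℂ)) * Uᴴ := hspec
    _ = V * Matrix.diagonal (fun m => (qv m : ℂ)) * Vᴴ := key
    _ = ρB ⊗ₖ ρE := by
        have hdq : Matrix.diagonal (fun m : b × e => (qv m : ℂ))
            = Matrix.diagonal (fun j => (pB j : ℂ)) ⊗ₖ Matrix.diagonal (fun k => (pE k : ℂ)) := by
          rw [Matrix.diagonal_kronecker_diagonal]
          have hfun : (fun m : b × e => ((qv m : ℝ) : ℂ))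
              = fun mn : b × e => (pB mn.1 : ℂ) * (pE mn.2 : ℂ) := by
            funext m
            rw [hqvdef]
            push_cast
            rfl
          rw [hfun]
        rw [hVdef, hdq, kron_conjT, ← Matrix.mul_kronecker_mul, ← Matrix.mul_kronecker_mul,
          ← hspecB, ← hspecE]


/-- Let `|φ⟩` be a pure state on `A ⊗ B ⊗ C ⊗ E` with
`I(A:E) = I(B:E) = I(C:E) = 0`.  Then for any two eigenvectors of
`σ_{ABC} = Tr_E |φ⟩⟨φ|` with distinct (nonzero) eigenvalues, the reduced density
matrices `Tr_B[|φ_i⟩⟨φ_i|]` on `A ⊗ C` are supported on orthogonal subspaces,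
i.e. their product vanishes. -/
theorem eigenvectors_distinguishable_on_AC
    {a b c e : Type*} [Fintype a] [Fintype b] [Fintype c] [Fintype e]
    [DecidableEq a] [DecidableEq b] [DecidableEq c] [DecidableEq e]
    (φ : a × b × c × e → ℂ) (hφ : ∑ q, Complex.normSq (φ q) = 1)
    (hAE : vN (rA (redABC (pureDM φ))) + vN (redE (pureDM φ)) = vN (redAE (pureDM φ)))
    (hBE : vN (rB (redABC (pureDM φ))) + vN (redE (pureDM φ)) = vN (redBE (pureDM φ)))
    (hCE : vN (rC (redABC (pureDM φ))) + vN (redE (pureDM φ)) = vN (redCE (pureDM φ)))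
    (u v : a × b × c → ℂ) (μ ν : ℝ) (hμ : μ ≠ 0) (hν : ν ≠ 0) (hμν : μ ≠ ν)
    (hu : (redABC (pureDM φ)) *ᵥ u = (μ : ℂ) • u)
    (hv : (redABC (pureDM φ)) *ᵥ v = (ν : ℂ) • v) :
    rAC (pureDM u) * rAC (pureDM v) = 0 := by

  have hprod : redBE (pureDM φ) = (rB (redABC (pureDM φ))) ⊗ₖ (redE (pureDM φ)) :=
    prodBE φ hφ hBE
  have hμc : (μ : ℂ) ≠ 0 := by exact_mod_cast hμ
  have hνc : (ν : ℂ) ≠ 0 := by exact_mod_cast hν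
  have hσa : ∀ s t : a × b × c, redABC (pureDM φ) s t
      = ∑ w, φ (s.1, s.2.1, s.2.2, w) * star (φ (t.1, t.2.1, t.2.2, w)) := by
    intro s t
    simp [redABC, pureDM, Matrix.vecMulVec_apply]
  have hσh : ∀ s t : a × b × c, star (redABC (pureDM φ) s t) = redABC (pureDM φ) t s := by
    intro s t
    rw [hσa s t, hσa t s, star_sum]
    refine Finset.sum_congr rfl fun w _ => ?_
    rw [star_mul', star_star]
    ring
  have hu' : ∀ s : a × b × c, (∑ t, redABC (pureDM φ) s t * u t) = (μ : ℂ) * u s := by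
    intro s
    have h1 := congrFun hu s
    simpa [Matrix.mulVec, dotProduct] using h1
  have hv' : ∀ s : a × b × c, (∑ t, redABC (pureDM φ) s t * v t) = (ν : ℂ) * v s := by
    intro s
    have h1 := congrFun hv s
    simpa [Matrix.mulVec, dotProduct] using h1
  -- orthogonality of u and v
  have hd : ∑ s, star (u s) * v s = 0 := by
    have hA1 : ∑ s, ∑ t, star (u s) * (redABC (pureDM φ) s t * v t)
        = (ν : ℂ) * ∑ s, star (u s) * v s := by
      rw [Finset.mul_sum]
      refine Finset.sum_congr rfl fun s _ => ?_
      rw [← Finset.mul_sum, hv' s]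
      ring
    have hA2 : ∑ s, ∑ t, star (u s) * (redABC (pureDM φ) s t * v t)
        = (μ : ℂ) * ∑ s, star (u s) * v s := by
      rw [Finset.sum_comm, Finset.mul_sum]
      refine Finset.sum_congr rfl fun t _ => ?_
      have e1 : ∑ s, star (u s) * (redABC (pureDM φ) s t * v t)
          = star (∑ s, redABC (pureDM φ) t s * u s) * v t := by
        rw [star_sum, Finset.sum_mul]
        refine Finset.sum_congr rfl fun s _ => ?_
        rw [star_mul', hσh t s]
        ring
      rw [e1, hu' t, star_mul']
      rw [show star ((μ:ℂ)) = (μ:ℂ) from by rw [Complex.star_def, Complex.conj_ofReal]]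
      ring
    have h3 : ((μ:ℂ) - (ν:ℂ)) * ∑ s, star (u s) * v s = 0 := by
      rw [sub_mul, ← hA1, ← hA2, sub_self]
    rcases mul_eq_zero.mp h3 with h | h
    · exfalso
      apply hμν
      have : (μ:ℂ) = (ν:ℂ) := by linear_combination h
      exact_mod_cast this
    · exact h
  -- the vectors η and ζ on E
  set η : e → ℂ := fun w => (μ:ℂ)⁻¹ * ∑ s : a × b × c, star (φ (s.1, s.2.1, s.2.2, w)) * u s
    with hηdef
  set ζ : e → ℂ := fun w => (ν:ℂ)⁻¹ * ∑ s : a × b × c, star (φ (s.1, s.2.1, s.2.2, w)) * v s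
    with hζdef
  have huη : ∀ s : a × b × c, (∑ w, φ (s.1, s.2.1, s.2.2, w) * η w) = u s := by
    intro s
    calc ∑ w, φ (s.1, s.2.1, s.2.2, w) * η w
        = ∑ w, ∑ t : a × b × c, (μ:ℂ)⁻¹ * (φ (s.1, s.2.1, s.2.2, w)
            * star (φ (t.1, t.2.1, t.2.2, w)) * u t) := by
          refine Finset.sum_congr rfl fun w _ => ?_
          simp only [hηdef]
          rw [Finset.mul_sum, Finset.mul_sum]
          exact Finset.sum_congr rfl fun t _ => by ring
      _ = (μ:ℂ)⁻¹ * ∑ t, redABC (pureDM φ) s t * u t := by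
          rw [Finset.sum_comm, Finset.mul_sum]
          refine Finset.sum_congr rfl fun t _ => ?_
          rw [hσa s t, Finset.sum_mul, Finset.mul_sum]
      _ = u s := by
          rw [hu' s, ← mul_assoc, inv_mul_cancel₀ hμc, one_mul]
  have hvζ : ∀ s : a × b × c, (∑ w, φ (s.1, s.2.1, s.2.2, w) * ζ w) = v s := by
    intro s
    calc ∑ w, φ (s.1, s.2.1, s.2.2, w) * ζ w
        = ∑ w, ∑ t : a × b × c, (ν:ℂ)⁻¹ * (φ (s.1, s.2.1, s.2.2, w)
            * star (φ (t.1, t.2.1, t.2.2, w)) * v t) := by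
          refine Finset.sum_congr rfl fun w _ => ?_
          simp only [hζdef]
          rw [Finset.mul_sum, Finset.mul_sum]
          exact Finset.sum_congr rfl fun t _ => by ring
      _ = (ν:ℂ)⁻¹ * ∑ t, redABC (pureDM φ) s t * v t := by
          rw [Finset.sum_comm, Finset.mul_sum]
          refine Finset.sum_congr rfl fun t _ => ?_
          rw [hσa s t, Finset.sum_mul, Finset.mul_sum]
      _ = v s := by
          rw [hv' s, ← mul_assoc, inv_mul_cancel₀ hνc, one_mul]
  clear hηdef hζdef
  clear_value η ζ
  -- entry formulas for redBE and redE
  have hBEa : ∀ (y : b) (w : e) (y' : b) (w' : e), redBE (pureDM φ) (y,w) (y',w')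
      = ∑ x, ∑ z, φ (x,y,z,w) * star (φ (x,y',z,w')) := by
    intro y w y' w'
    simp [redBE, pureDM, Matrix.vecMulVec_apply]
  have hEa : ∀ (w w' : e), redE (pureDM φ) w w'
      = ∑ s : a × b × c, φ (s.1, s.2.1, s.2.2, w) * star (φ (s.1, s.2.1, s.2.2, w')) := by
    intro w w'
    simp [redE, pureDM, Matrix.vecMulVec_apply, Fintype.sum_prod_type]
  have hEastar : ∀ (w w' : e), star (redE (pureDM φ) w w')
      = ∑ s : a × b × c, star (φ (s.1, s.2.1, s.2.2, w)) * φ (s.1, s.2.1, s.2.2, w') := by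
    intro w w'
    rw [hEa w w', star_sum]
    refine Finset.sum_congr rfl fun s _ => ?_
    rw [star_mul', star_star]
  -- the scalar c
  have hc : ∑ w, ∑ w', star (η w) * ζ w' * star (redE (pureDM φ) w w') = 0 := by
    calc ∑ w, ∑ w', star (η w) * ζ w' * star (redE (pureDM φ) w w')
        = ∑ w, ∑ w', ∑ s : a × b × c, (star (φ (s.1, s.2.1, s.2.2, w)) * star (η w))
            * (φ (s.1, s.2.1, s.2.2, w') * ζ w') := by
          refine Finset.sum_congr rfl fun w _ => Finset.sum_congr rfl fun w' _ => ?_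
          rw [hEastar w w', Finset.mul_sum]
          exact Finset.sum_congr rfl fun s _ => by ring
      _ = ∑ s : a × b × c, star (u s) * v s := by
          rw [Finset.sum_congr rfl fun w _ => Finset.sum_comm, Finset.sum_comm]
          refine Finset.sum_congr rfl fun s _ => ?_
          rw [← huη s, ← hvζ s, star_sum, Finset.sum_mul_sum]
          exact Finset.sum_congr rfl fun w _ => Finset.sum_congr rfl fun w' _ => by
            rw [star_mul']
      _ = 0 := hd
  -- cross marginal on B of v u† vanishes
  have hM : ∀ y y' : b, (∑ m : a × c, star (u (m.1, y, m.2)) * v (m.1, y', m.2)) = 0 := by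
    intro y y'
    have hBEstar : ∀ (w w' : e), star (redBE (pureDM φ) (y,w) (y',w'))
        = ∑ x, ∑ z, star (φ (x,y,z,w)) * φ (x,y',z,w') := by
      intro w w'
      rw [hBEa y w y' w', star_sum]
      refine Finset.sum_congr rfl fun x _ => ?_
      rw [star_sum]
      refine Finset.sum_congr rfl fun z _ => ?_
      rw [star_mul', star_star]
    have e1 : ∀ (w w' : e), star (redBE (pureDM φ) (y,w) (y',w'))
        = star ((rB (redABC (pureDM φ))) y y') * star ((redE (pureDM φ)) w w') := by
      intro w w'
      rw [hprod]
      rw [show ((rB (redABC (pureDM φ))) ⊗ₖ (redE (pureDM φ))) (y,w) (y',w')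
          = (rB (redABC (pureDM φ))) y y' * (redE (pureDM φ)) w w' from rfl]
      rw [star_mul']
    calc ∑ m : a × c, star (u (m.1, y, m.2)) * v (m.1, y', m.2)
        = ∑ m : a × c, ∑ w, ∑ w', (star (η w) * ζ w')
            * (star (φ (m.1, y, m.2, w)) * φ (m.1, y', m.2, w')) := by
          refine Finset.sum_congr rfl fun m _ => ?_
          rw [← huη (m.1, y, m.2), ← hvζ (m.1, y', m.2), star_sum, Finset.sum_mul_sum]
          exact Finset.sum_congr rfl fun w _ => Finset.sum_congr rfl fun w' _ => by
            rw [star_mul']; ring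
      _ = ∑ w, ∑ w', (star (η w) * ζ w') * star (redBE (pureDM φ) (y,w) (y',w')) := by
          rw [Finset.sum_comm]
          refine Finset.sum_congr rfl fun w _ => ?_
          rw [Finset.sum_comm]
          refine Finset.sum_congr rfl fun w' _ => ?_
          rw [hBEstar w w', Finset.mul_sum, Fintype.sum_prod_type]
          refine Finset.sum_congr rfl fun x _ => ?_
          rw [Finset.mul_sum]
      _ = star ((rB (redABC (pureDM φ))) y y')
            * ∑ w, ∑ w', star (η w) * ζ w' * star (redE (pureDM φ) w w') := by
          rw [Finset.mul_sum]
          refine Finset.sum_congr rfl fun w _ => ?_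
          rw [Finset.mul_sum]
          refine Finset.sum_congr rfl fun w' _ => ?_
          rw [e1 w w']
          ring
      _ = 0 := by rw [hc, mul_zero]
  -- assemble the conclusion
  set Ku : Matrix (a × c) b ℂ := Matrix.of fun (m : a × c) (y : b) => u (m.1, y, m.2) with hKu
  set Kv : Matrix (a × c) b ℂ := Matrix.of fun (m : a × c) (y : b) => v (m.1, y, m.2) with hKv
  have hKuv : Kuᴴ * Kv = 0 := by
    ext y y'
    rw [Matrix.mul_apply]
    simp only [hKu, hKv, Matrix.conjTranspose_apply, Matrix.of_apply, Matrix.zero_apply]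
    exact hM y y'
  have hrACu : rAC (pureDM u) = Ku * Kuᴴ := by
    ext ⟨x, z⟩ ⟨x', z'⟩
    simp [hKu, rAC, pureDM, Matrix.mul_apply, Matrix.vecMulVec_apply,
      Matrix.conjTranspose_apply]
  have hrACv : rAC (pureDM v) = Kv * Kvᴴ := by
    ext ⟨x, z⟩ ⟨x', z'⟩
    simp [hKv, rAC, pureDM, Matrix.mul_apply, Matrix.vecMulVec_apply,
      Matrix.conjTranspose_apply]
  rw [hrACu, hrACv, Matrix.mul_assoc, ← Matrix.mul_assoc Kuᴴ Kv Kvᴴ, hKuv,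
    Matrix.zero_mul, Matrix.mul_zero]
end

section
/- Let ρ_1, ρ_2 be density matrices and 0 < p < 1, and set ρ = p ρ_1 + (1-p) ρ_2. Then S(ρ) ≤ p S(ρ_1) + (1-p) S(ρ_2) + h(p), where h(p) = -p log p - (1-p) log(1-p), with equality if and only if ρ_1 ρ_2 = 0 (i.e., ρ_1 and ρ_2 have orthogonal supports). -/
open scoped Kronecker ComplexOrder
open Matrix

section mixAux
open Polynomial


noncomputable def glog (x : ℝ) : ℝ := if x = 0 then 0 else Real.log x

lemma negMulLog_eq_glog (x : ℝ) : Real.negMulLog x = -(x * glog x) := by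
  unfold glog
  by_cases h : x = 0 <;> simp [h, Real.negMulLog] <;> ring

lemma scalar_klein (x y : ℝ) (hx : 0 ≤ x) (hy : 0 ≤ y) (hsupp : y = 0 → x = 0) :
    Real.negMulLog x ≤ -(x * glog y) - x + y ∧
      (Real.negMulLog x = -(x * glog y) - x + y ↔ x = y) := by
  rcases eq_or_lt_of_le hy with hy0 | hy0
  · have hx0 := hsupp hy0.symm
    subst hx0; rw [← hy0]
    simp [glog, Real.negMulLog]
  · have hg : glog y = Real.log y := by unfold glog; rw [if_neg (ne_of_gt hy0)]
    rw [hg]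
    rcases eq_or_lt_of_le hx with hx0 | hx0
    · subst hx0
      constructor
      · simp [Real.negMulLog]; positivity
      · simp only [Real.negMulLog, neg_zero, zero_mul, mul_zero, neg_zero, sub_zero, zero_sub]
        constructor
        · intro h; linarith
        · intro h; linarith
    · -- x > 0, y > 0
      have key : Real.log (y / x) ≤ y / x - 1 := Real.log_le_sub_one_of_pos (by positivity)
      have hlog : Real.log (y / x) = Real.log y - Real.log x :=
        Real.log_div (ne_of_gt hy0) (ne_of_gt hx0)
      have hineq : x * Real.log (y / x) ≤ y - x := by
        have := mul_le_mul_of_nonneg_left key (le_of_lt hx0)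
        calc x * Real.log (y / x) ≤ x * (y / x - 1) := this
          _ = y - x := by field_simp
      constructor
      · rw [Real.negMulLog]
        nlinarith [hineq, hlog]
      · constructor
        · intro h
          by_contra hne
          have hne' : y / x ≠ 1 := by
            intro h1; apply hne; field_simp at h1; linarith
          have key2 : Real.log (y / x) < y / x - 1 :=
            Real.log_lt_sub_one_of_pos (by positivity) hne'
          have hineq2 : x * Real.log (y / x) < y - x := by
            have := mul_lt_mul_of_pos_left key2 hx0
            calc x * Real.log (y / x) < x * (y / x - 1) := this
              _ = y - x := by field_simp
          rw [Real.negMulLog] at h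
          nlinarith [hineq2, hlog]
        · intro h; subst h; rw [Real.negMulLog]; ring


variable {N : Type*} [Fintype N] [DecidableEq N]

lemma charpoly_conj_pair (S A T : Matrix N N ℂ) (hST : S * T = 1) (hTS : T * S = 1) :
    (S * A * T).charpoly = A.charpoly := by
  have hmap : ∀ (X Y : Matrix N N ℂ), (X * Y).map (C : ℂ →+* ℂ[X]) =
      X.map C * Y.map C := fun X Y => Matrix.map_mul
  have hcomm : ∀ M : Matrix N N ℂ[X], scalar N (X : ℂ[X]) * M = M * scalar N (X : ℂ[X]) :=
    fun M => (Matrix.scalar_commute (X : ℂ[X]) (Commute.all _) M).eq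
  have key : charmatrix (S * A * T) = S.map C * charmatrix A * T.map C := by
    unfold charmatrix
    simp only [RingHom.mapMatrix_apply]
    rw [Matrix.mul_sub, Matrix.sub_mul, hmap, hmap]
    congr 1
    rw [← hcomm, mul_assoc, ← hmap, hST]
    simp
  rw [Matrix.charpoly, key, det_mul, det_mul, mul_comm, ← mul_assoc, ← det_mul, ← hmap, hTS]
  simp [Matrix.charpoly]

lemma charpoly_diagonal (d : N → ℂ) :
    (diagonal d).charpoly = ∏ i, (X - C (d i)) := by
  have h : charmatrix (diagonal d) = diagonal (fun i => X - C (d i)) := by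
    ext i j
    by_cases h : i = j
    · subst h; simp
    · rw [charmatrix_apply_ne _ _ _ h, diagonal_apply_ne _ h, diagonal_apply_ne _ h]
      simp
  rw [Matrix.charpoly, h, det_diagonal]

lemma charpoly_zero' : (0 : Matrix N N ℂ).charpoly = X ^ (Fintype.card N) := by
  rw [← diagonal_zero, _root_.charpoly_diagonal]
  simp [Finset.card_univ]

lemma charpoly_mul_comm' (A B : Matrix N N ℂ) : (A * B).charpoly = (B * A).charpoly := by
  classical
  set S : Matrix (N ⊕ N) (N ⊕ N) ℂ := fromBlocks 1 A 0 1 with hS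
  set T : Matrix (N ⊕ N) (N ⊕ N) ℂ := fromBlocks 1 (-A) 0 1 with hT
  have hST : S * T = 1 := by
    simp [hS, hT, fromBlocks_multiply, ← fromBlocks_one]
  have hTS : T * S = 1 := by
    simp [hS, hT, fromBlocks_multiply, ← fromBlocks_one]
  have hconj : T * (fromBlocks (A * B) 0 B 0) * S = fromBlocks 0 0 B (B * A) := by
    simp [hS, hT, fromBlocks_multiply, Matrix.mul_assoc]
  have h1 : (fromBlocks (A * B) 0 B (0 : Matrix N N ℂ)).charpoly
      = (A * B).charpoly * X ^ (Fintype.card N) := by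
    rw [Matrix.charpoly_fromBlocks_zero₁₂, charpoly_zero']
  have h2 : (fromBlocks 0 0 B (B * A)).charpoly
      = X ^ (Fintype.card N) * (B * A).charpoly := by
    rw [Matrix.charpoly_fromBlocks_zero₁₂, charpoly_zero']
  have := charpoly_conj_pair T (fromBlocks (A * B) 0 B 0) S hTS hST
  rw [hconj, h1, h2] at this
  have hX : (X : ℂ[X]) ^ (Fintype.card N) ≠ 0 := pow_ne_zero _ X_ne_zero
  rw [mul_comm ((X:ℂ[X]) ^ (Fintype.card N))] at this
  exact (mul_right_cancel₀ hX this).symm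


variable {N J : Type*} [Fintype N] [DecidableEq N] [Fintype J] [DecidableEq J]

-- charpoly of a unitary diagonalization
lemma charpoly_of_udiag (A W : Matrix N N ℂ) (mu : N → ℝ)
    (hW : Wᴴ * W = 1) (hW' : W * Wᴴ = 1)
    (hA : A = W * diagonal (fun i => (mu i : ℂ)) * Wᴴ) :
    A.charpoly = ∏ i, (X - C ((mu i : ℂ))) := by
  rw [hA, charpoly_conj_pair W _ Wᴴ hW' hW, _root_.charpoly_diagonal]

-- transfer of spectral sums
lemma sum_f_of_charpoly (lam : N → ℝ) (mu : J → ℝ) (k : ℕ)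
    (h : (∏ i, (X - C ((lam i : ℂ)))) = (∏ j, (X - C ((mu j : ℂ)))) * X ^ k)
    (f : ℝ → ℝ) (hf : f 0 = 0) :
    ∑ i, f (lam i) = ∑ j, f (mu j) := by
  have hroots : (Finset.univ.val.map (fun i => ((lam i : ℂ)))) =
      (Finset.univ.val.map (fun j => ((mu j : ℂ)))) + Multiset.replicate k 0 := by
    have h1 : (∏ i, (X - C ((lam i : ℂ)))).roots = Finset.univ.val.map (fun i => ((lam i : ℂ))) := by
      rw [Polynomial.roots_prod _ _ (by
        apply Finset.prod_ne_zero_iff.2; intro i _; exact X_sub_C_ne_zero _)]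
      simp [Polynomial.roots_X_sub_C]
    have h2 : ((∏ j, (X - C ((mu j : ℂ)))) * X ^ k).roots =
        Finset.univ.val.map (fun j => ((mu j : ℂ))) + Multiset.replicate k 0 := by
      rw [Polynomial.roots_mul (mul_ne_zero (by
            apply Finset.prod_ne_zero_iff.2; intro j _; exact X_sub_C_ne_zero _)
          (pow_ne_zero _ X_ne_zero)), Polynomial.roots_pow, Polynomial.roots_X,
        Polynomial.roots_prod _ _ (by
          apply Finset.prod_ne_zero_iff.2; intro j _; exact X_sub_C_ne_zero _)]
      simp [Polynomial.roots_X_sub_C, Multiset.nsmul_singleton]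
    rw [← h1, h, h2]
  -- pull back to ℝ
  have hR : (Finset.univ.val.map lam) = (Finset.univ.val.map mu) + Multiset.replicate k 0 := by
    have hinj : Function.Injective (fun x : ℝ => (x : ℂ)) := Complex.ofReal_injective
    apply Multiset.map_injective hinj
    simpa [Multiset.map_map, Multiset.map_replicate] using hroots
  calc ∑ i, f (lam i) = ((Finset.univ.val.map lam).map f).sum := by
        simp [Multiset.map_map]
    _ = ((Finset.univ.val.map mu).map f).sum + ((Multiset.replicate k (0:ℝ)).map f).sum := by
        rw [hR]; simp [Multiset.map_add]
    _ = ∑ j, f (mu j) := by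
        simp [Multiset.map_replicate, hf, Multiset.sum_replicate]

variable {N : Type*} [Fintype N] [DecidableEq N]

lemma klein (C D V W : Matrix N N ℂ) (lam mu : N → ℝ)
    (hV : Vᴴ * V = 1) (hV' : V * Vᴴ = 1) (hW : Wᴴ * W = 1) (hW' : W * Wᴴ = 1)
    (hCd : C = V * diagonal (fun i => (lam i : ℂ)) * Vᴴ)
    (hDd : D = W * diagonal (fun i => (mu i : ℂ)) * Wᴴ)
    (hlam : ∀ i, 0 ≤ lam i) (hmu : ∀ j, 0 ≤ mu j)
    (hdiag : ∀ j, (Wᴴ * C * W) j j = ((mu j : ℝ) : ℂ)) :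
    (∑ i, Real.negMulLog (lam i) ≤ ∑ j, Real.negMulLog (mu j)) ∧
      ((∑ i, Real.negMulLog (lam i) = ∑ j, Real.negMulLog (mu j)) → C = D) := by
  classical
  set Q := Vᴴ * W with hQ
  have hQ1 : Qᴴ * Q = 1 := by
    rw [hQ, conjTranspose_mul, conjTranspose_conjTranspose]
    calc Wᴴ * V * (Vᴴ * W) = Wᴴ * (V * Vᴴ) * W := by noncomm_ring
      _ = 1 := by rw [hV']; rw [Matrix.mul_one]; exact hW
  have hQ2 : Q * Qᴴ = 1 := by
    rw [hQ, conjTranspose_mul, conjTranspose_conjTranspose]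
    calc Vᴴ * W * (Wᴴ * V) = Vᴴ * (W * Wᴴ) * V := by noncomm_ring
      _ = 1 := by rw [hW']; rw [Matrix.mul_one]; exact hV
  set B : N → N → ℝ := fun i j => Complex.normSq (Q i j) with hB
  have hBnn : ∀ i j, 0 ≤ B i j := fun i j => Complex.normSq_nonneg _
  -- row sums
  have hrow : ∀ i, ∑ j, B i j = 1 := by
    intro i
    have := congrFun (congrFun hQ2 i) i
    simp only [Matrix.mul_apply, Matrix.one_apply_eq, conjTranspose_apply] at this
    have : ∑ j, ((B i j : ℝ) : ℂ) = 1 := by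
      rw [← this]
      congr 1; ext j
      simp only [hB, Complex.star_def, Complex.mul_conj]
    exact_mod_cast this
  -- column sums
  have hcol : ∀ j, ∑ i, B i j = 1 := by
    intro j
    have := congrFun (congrFun hQ1 j) j
    simp only [Matrix.mul_apply, Matrix.one_apply_eq, conjTranspose_apply] at this
    have : ∑ i, ((B i j : ℝ) : ℂ) = 1 := by
      rw [← this]
      congr 1; ext i
      rw [mul_comm]
      simp only [hB, Complex.star_def, Complex.mul_conj]
    exact_mod_cast this
  -- diagonal entries of Wᴴ C W
  have hWCW : ∀ j, (Wᴴ * C * W) j j = ((∑ i, B i j * lam i : ℝ) : ℂ) := by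
    intro j
    have hform : Wᴴ * C * W = Qᴴ * diagonal (fun i => (lam i : ℂ)) * Q := by
      rw [hCd, hQ, conjTranspose_mul, conjTranspose_conjTranspose]
      noncomm_ring
    rw [hform, Matrix.mul_assoc, Matrix.mul_apply]
    push_cast
    apply Finset.sum_congr rfl
    intro i _
    rw [conjTranspose_apply, Matrix.diagonal_mul]
    have hbb : (Complex.normSq (Q i j) : ℂ) = star (Q i j) * Q i j := by
      rw [mul_comm]; simp only [Complex.star_def, Complex.mul_conj]
    rw [hB]; rw [hbb]; ring
  -- the c_j coefficients equal mu j
  have hc : ∀ j, ∑ i, B i j * lam i = mu j := by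
    intro j
    have := (hWCW j).symm.trans (hdiag j)
    exact_mod_cast this
  -- support condition
  have hsupp' : ∀ i j, B i j ≠ 0 → mu j = 0 → lam i = 0 := by
    intro i j hBij hmuj
    have hsum : ∑ i, B i j * lam i = 0 := by rw [hc j, hmuj]
    have hterm : B i j * lam i = 0 := by
      have hnn : ∀ k ∈ Finset.univ, 0 ≤ B k j * lam k :=
        fun k _ => mul_nonneg (hBnn k j) (hlam k)
      exact (Finset.sum_eq_zero_iff_of_nonneg hnn).1 hsum i (Finset.mem_univ i)
    rcases mul_eq_zero.1 hterm with h | h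
    · exact absurd h hBij
    · exact h
  -- termwise inequality
  have hterm_le : ∀ i j, B i j * Real.negMulLog (lam i)
      ≤ B i j * (-(lam i * glog (mu j)) - lam i + mu j) := by
    intro i j
    by_cases hBij : B i j = 0
    · simp [hBij]
    · exact mul_le_mul_of_nonneg_left
        ((scalar_klein (lam i) (mu j) (hlam i) (hmu j) (hsupp' i j hBij)).1) (hBnn i j)
  -- sums
  have hLHS : ∑ i, Real.negMulLog (lam i)
      = ∑ i, ∑ j, B i j * Real.negMulLog (lam i) := by
    apply Finset.sum_congr rfl
    intro i _
    rw [← Finset.sum_mul, hrow i, one_mul]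
  have hRHS : ∑ i, ∑ j, B i j * (-(lam i * glog (mu j)) - lam i + mu j)
      = ∑ j, Real.negMulLog (mu j) := by
    rw [Finset.sum_comm]
    apply Finset.sum_congr rfl
    intro j _
    have : ∀ i, B i j * (-(lam i * glog (mu j)) - lam i + mu j)
        = -(B i j * lam i) * glog (mu j) - B i j * lam i + B i j * mu j := by
      intro i; ring
    rw [Finset.sum_congr rfl (fun i _ => this i)]
    rw [Finset.sum_add_distrib, Finset.sum_sub_distrib, ← Finset.sum_mul,
      Finset.sum_neg_distrib, hc j, ← Finset.sum_mul, hcol j,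
      negMulLog_eq_glog]
    ring
  constructor
  · rw [hLHS, ← hRHS]
    exact Finset.sum_le_sum fun i _ => Finset.sum_le_sum fun j _ => hterm_le i j
  · intro hEq
    -- all termwise inequalities are equalities
    have hzero : ∑ p : N × N, (B p.1 p.2 * (-(lam p.1 * glog (mu p.2)) - lam p.1 + mu p.2)
        - B p.1 p.2 * Real.negMulLog (lam p.1)) = 0 := by
      rw [Finset.sum_sub_distrib]
      rw [Fintype.sum_prod_type, Fintype.sum_prod_type]
      rw [hRHS, ← hLHS, hEq]
      ring
    have hall : ∀ p : N × N, B p.1 p.2 * (-(lam p.1 * glog (mu p.2)) - lam p.1 + mu p.2)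
        - B p.1 p.2 * Real.negMulLog (lam p.1) = 0 := by
      intro p
      have hnn : ∀ q ∈ (Finset.univ : Finset (N × N)),
          0 ≤ B q.1 q.2 * (-(lam q.1 * glog (mu q.2)) - lam q.1 + mu q.2)
            - B q.1 q.2 * Real.negMulLog (lam q.1) :=
        fun q _ => sub_nonneg.2 (hterm_le q.1 q.2)
      exact (Finset.sum_eq_zero_iff_of_nonneg hnn).1 hzero p (Finset.mem_univ p)
    have hkey : ∀ i j, Q i j ≠ 0 → lam i = mu j := by
      intro i j hQij
      have hBij : B i j ≠ 0 := by
        rw [hB]; simpa using hQij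
      have := hall (i, j)
      simp only at this
      have heq : Real.negMulLog (lam i) = -(lam i * glog (mu j)) - lam i + mu j := by
        have h2 : B i j * Real.negMulLog (lam i)
            = B i j * (-(lam i * glog (mu j)) - lam i + mu j) := by linarith
        exact mul_left_cancel₀ hBij h2
      exact ((scalar_klein (lam i) (mu j) (hlam i) (hmu j) (hsupp' i j hBij)).2).1 heq
    -- conclude C = D
    have hWV : W = V * Q := by
      rw [hQ, ← Matrix.mul_assoc, hV', Matrix.one_mul]
    have hdq : diagonal (fun i => ((lam i : ℝ) : ℂ)) * Q
        = Q * diagonal (fun j => ((mu j : ℝ) : ℂ)) := by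
      ext i j
      rw [Matrix.diagonal_mul, Matrix.mul_diagonal]
      by_cases hQij : Q i j = 0
      · rw [hQij, mul_zero, zero_mul]
      · rw [hkey i j hQij]; ring
    have hCW : C * W = D * W := by
      rw [hCd, hDd]
      calc V * diagonal (fun i => ((lam i : ℝ) : ℂ)) * Vᴴ * W
          = V * (diagonal (fun i => ((lam i : ℝ) : ℂ)) * Q) := by
            rw [hQ]; noncomm_ring
        _ = V * Q * diagonal (fun j => ((mu j : ℝ) : ℂ)) := by
            rw [hdq]; noncomm_ring
        _ = W * diagonal (fun j => ((mu j : ℝ) : ℂ)) * (Wᴴ * W) := by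
            rw [hW, Matrix.mul_one, hWV]
        _ = W * diagonal (fun j => ((mu j : ℝ) : ℂ)) * Wᴴ * W := by noncomm_ring
    calc C = C * (W * Wᴴ) := by rw [hW', Matrix.mul_one]
      _ = C * W * Wᴴ := by noncomm_ring
      _ = D * W * Wᴴ := by rw [hCW]
      _ = D * (W * Wᴴ) := by noncomm_ring
      _ = D := by rw [hW', Matrix.mul_one]


variable {n : Type*} [Fintype n] [DecidableEq n]

-- extract a unitary diagonalization with ℝ→ℂ coercion
lemma herm_decomp {A : Matrix n n ℂ} (hA : A.IsHermitian) :
    ∃ U : Matrix n n ℂ, Uᴴ * U = 1 ∧ U * Uᴴ = 1 ∧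
      A = U * diagonal (fun i => ((hA.eigenvalues i : ℝ) : ℂ)) * Uᴴ := by
  refine ⟨hA.eigenvectorUnitary, ?_, ?_, ?_⟩
  · rw [← star_eq_conjTranspose]
    exact Unitary.coe_star_mul_self hA.eigenvectorUnitary
  · rw [← star_eq_conjTranspose]
    exact Unitary.coe_mul_star_self hA.eigenvectorUnitary
  · rw [← star_eq_conjTranspose]
    convert hA.spectral_theorem using 2
    simp [Unitary.conjStarAlgAut_apply]; rfl

-- trace = sum of eigenvalues (complex form)
lemma trace_of_udiag (A U : Matrix n n ℂ) (d : n → ℝ) (hU : Uᴴ * U = 1)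
    (hA : A = U * diagonal (fun i => ((d i : ℝ) : ℂ)) * Uᴴ) :
    A.trace = ((∑ i, d i : ℝ) : ℂ) := by
  rw [hA, Matrix.trace_mul_cycle, hU, Matrix.one_mul, Matrix.trace_diagonal]
  push_cast; rfl

example (X : Matrix n n ℂ) (h : X.trace = 0) : True := trivial

-- trace (Xᴴ X) = 0 → X = 0
lemma eq_zero_of_trace_conjTranspose_mul (X : Matrix n n ℂ) (h : (Xᴴ * X).trace = 0) :
    X = 0 := by
  have : ∑ j, ∑ i, Complex.normSq (X i j) = 0 := by
    have h2 : ((∑ j, ∑ i, Complex.normSq (X i j) : ℝ) : ℂ) = 0 := by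
      rw [← h, Matrix.trace]
      push_cast
      apply Finset.sum_congr rfl
      intro j _
      rw [Matrix.diag, Matrix.mul_apply]
      apply Finset.sum_congr rfl
      intro i _
      rw [conjTranspose_apply, mul_comm]
      simp [Complex.star_def, Complex.mul_conj]
    exact_mod_cast h2
  ext i j
  have := (Finset.sum_eq_zero_iff_of_nonneg (fun j _ => Finset.sum_nonneg
    (fun i _ => Complex.normSq_nonneg (X i j)))).1 this j (Finset.mem_univ j)
  have := (Finset.sum_eq_zero_iff_of_nonneg (fun i _ => Complex.normSq_nonneg (X i j))).1
    this i (Finset.mem_univ i)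
  simpa using Complex.normSq_eq_zero.1 this


end mixAux
open Polynomial in
/-- For density matrices `ρ₁, ρ₂` and `0 < p < 1`, the mixture
`ρ = p ρ₁ + (1-p) ρ₂` satisfies `S(ρ) ≤ p S(ρ₁) + (1-p) S(ρ₂) + h(p)` with
`h(p) = -p log p - (1-p) log (1-p)`, with equality iff `ρ₁ ρ₂ = 0`
(orthogonal supports). -/
theorem mixing_entropy_bound_two
    {n : Type*} [Fintype n] [DecidableEq n]
    (ρ₁ ρ₂ : Matrix n n ℂ) (h₁ : IsDensity ρ₁) (h₂ : IsDensity ρ₂)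
    (p : ℝ) (hp0 : 0 < p) (hp1 : p < 1) :
    vN ((p : ℂ) • ρ₁ + ((1 - p : ℝ) : ℂ) • ρ₂)
        ≤ p * vN ρ₁ + (1 - p) * vN ρ₂ + (Real.negMulLog p + Real.negMulLog (1 - p)) ∧
      (vN ((p : ℂ) • ρ₁ + ((1 - p : ℝ) : ℂ) • ρ₂)
          = p * vN ρ₁ + (1 - p) * vN ρ₂ + (Real.negMulLog p + Real.negMulLog (1 - p))
        ↔ ρ₁ * ρ₂ = 0) := by
  classical
  obtain ⟨hρ₁psd, hρ₁tr⟩ := h₁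
  obtain ⟨hρ₂psd, hρ₂tr⟩ := h₂
  have h1h : ρ₁.IsHermitian := hρ₁psd.1
  have h2h : ρ₂.IsHermitian := hρ₂psd.1
  set q : ℝ := 1 - p with hqdef
  have hq0 : 0 < q := by rw [hqdef]; linarith
  set ρ : Matrix n n ℂ := (p : ℂ) • ρ₁ + ((q : ℝ) : ℂ) • ρ₂ with hρdef
  have hsmul_herm : ∀ (c : ℝ) (A : Matrix n n ℂ), A.IsHermitian → ((c:ℂ) • A).IsHermitian := by
    intro c A hA
    have : ((c:ℂ) • A)ᴴ = (c:ℂ) • Aᴴ := by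
      rw [conjTranspose_smul]
      congr 1
      simp [Complex.star_def, Complex.conj_ofReal]
    unfold Matrix.IsHermitian
    rw [this, hA.eq]
  have hρh : ρ.IsHermitian := (hsmul_herm p ρ₁ h1h).add (hsmul_herm q ρ₂ h2h)
  -- square roots
  open scoped MatrixOrder in
  set s₁ : Matrix n n ℂ := CFC.sqrt ρ₁ with hs₁def
  open scoped MatrixOrder in
  set s₂ : Matrix n n ℂ := CFC.sqrt ρ₂ with hs₂def
  set a : Matrix n n ℂ := (Real.sqrt p : ℂ) • s₁ with hadef
  set b : Matrix n n ℂ := (Real.sqrt q : ℂ) • s₂ with hbdef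
  have haher : aᴴ = a := by
    rw [hadef, conjTranspose_smul, hs₁def, (open scoped MatrixOrder in (CFC.sqrt_nonneg ρ₁).posSemidef.1.eq)]
    congr 1
    simp [Complex.star_def, Complex.conj_ofReal]
  have hbher : bᴴ = b := by
    rw [hbdef, conjTranspose_smul, hs₂def, (open scoped MatrixOrder in (CFC.sqrt_nonneg ρ₂).posSemidef.1.eq)]
    congr 1
    simp [Complex.star_def, Complex.conj_ofReal]
  have haa : a * a = (p:ℂ) • ρ₁ := by
    rw [hadef, smul_mul_assoc, mul_smul_comm, smul_smul, hs₁def, (open scoped MatrixOrder in CFC.sqrt_mul_sqrt_self ρ₁ hρ₁psd.nonneg)]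
    congr 1
    rw [← Complex.ofReal_mul, Real.mul_self_sqrt hp0.le]
  have hbb : b * b = (q:ℂ) • ρ₂ := by
    rw [hbdef, smul_mul_assoc, mul_smul_comm, smul_smul, hs₂def, (open scoped MatrixOrder in CFC.sqrt_mul_sqrt_self ρ₂ hρ₂psd.nonneg)]
    congr 1
    rw [← Complex.ofReal_mul, Real.mul_self_sqrt hq0.le]
  -- block matrices
  set M : Matrix (n ⊕ n) (n ⊕ n) ℂ := fromBlocks a 0 b 0 with hMdef
  have hMH : Mᴴ = fromBlocks a b 0 0 := by
    rw [hMdef, fromBlocks_conjTranspose, haher, hbher]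
    simp
  set CC : Matrix (n ⊕ n) (n ⊕ n) ℂ := M * Mᴴ with hCdef
  set DD : Matrix (n ⊕ n) (n ⊕ n) ℂ := fromBlocks ((p:ℂ) • ρ₁) 0 0 ((q:ℂ) • ρ₂) with hDdef
  have hCblocks : CC = fromBlocks ((p:ℂ) • ρ₁) (a*b) (b*a) ((q:ℂ) • ρ₂) := by
    rw [hCdef, hMH, hMdef]
    simp [fromBlocks_multiply, haa, hbb]
  have hMHM : Mᴴ * M = fromBlocks ρ 0 0 0 := by
    rw [hMH, hMdef]
    simp [fromBlocks_multiply, haa, hbb, hρdef]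
  -- eigen-decompositions
  obtain ⟨U₁, hU₁a, hU₁b, hU₁d⟩ := herm_decomp h1h
  obtain ⟨U₂, hU₂a, hU₂b, hU₂d⟩ := herm_decomp h2h
  set e₁ : n → ℝ := h1h.eigenvalues
  set e₂ : n → ℝ := h2h.eigenvalues
  have hsum₁ : ∑ i, e₁ i = 1 := by
    have := trace_of_udiag ρ₁ U₁ e₁ hU₁a hU₁d
    rw [hρ₁tr] at this
    exact_mod_cast this.symm
  have hsum₂ : ∑ i, e₂ i = 1 := by
    have := trace_of_udiag ρ₂ U₂ e₂ hU₂a hU₂d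
    rw [hρ₂tr] at this
    exact_mod_cast this.symm
  set W : Matrix (n ⊕ n) (n ⊕ n) ℂ := fromBlocks U₁ 0 0 U₂ with hWdef
  set mu : n ⊕ n → ℝ := Sum.elim (fun i => p * e₁ i) (fun i => q * e₂ i) with hmudef
  have hWH : Wᴴ = fromBlocks U₁ᴴ 0 0 U₂ᴴ := by
    rw [hWdef, fromBlocks_conjTranspose]; simp
  have hWa : Wᴴ * W = 1 := by
    rw [hWH, hWdef]
    simp [fromBlocks_multiply, hU₁a, hU₂a, ← fromBlocks_one]
  have hWb : W * Wᴴ = 1 := by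
    rw [hWH, hWdef]
    simp [fromBlocks_multiply, hU₁b, hU₂b, ← fromBlocks_one]
  set dg₁ : Matrix n n ℂ := diagonal (fun i => ((p * e₁ i : ℝ) : ℂ)) with hdg₁def
  set dg₂ : Matrix n n ℂ := diagonal (fun i => ((q * e₂ i : ℝ) : ℂ)) with hdg₂def
  have hdiagmu : diagonal (fun k => ((mu k : ℝ) : ℂ)) = fromBlocks dg₁ 0 0 dg₂ := by
    ext k l
    cases k <;> cases l <;>
      simp [hmudef, hdg₁def, hdg₂def, Matrix.diagonal_apply, Sum.inl.injEq, Sum.inr.injEq,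
        Matrix.fromBlocks]
  have hA1 : (p:ℂ) • ρ₁ = U₁ * dg₁ * U₁ᴴ := by
    have hdd : dg₁ = (p:ℂ) • diagonal (fun i => ((e₁ i : ℝ) : ℂ)) := by
      rw [hdg₁def]
      ext i j
      by_cases h : i = j
      · subst h; push_cast; simp
      · simp [Matrix.diagonal_apply_ne _ h]
    rw [hdd, hU₁d, mul_smul_comm, smul_mul_assoc]
  have hA2 : (q:ℂ) • ρ₂ = U₂ * dg₂ * U₂ᴴ := by
    have hdd : dg₂ = (q:ℂ) • diagonal (fun i => ((e₂ i : ℝ) : ℂ)) := by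
      rw [hdg₂def]
      ext i j
      by_cases h : i = j
      · subst h; push_cast; simp
      · simp [Matrix.diagonal_apply_ne _ h]
    rw [hdd, hU₂d, mul_smul_comm, smul_mul_assoc]
  have hWD : DD = W * diagonal (fun k => ((mu k : ℝ) : ℂ)) * Wᴴ := by
    rw [hdiagmu, hWdef, hWH, hDdef]
    simp [fromBlocks_multiply, ← hA1, ← hA2]
  -- diagonal condition for Klein
  have hU₁diag : U₁ᴴ * ((p:ℂ) • ρ₁) * U₁ = dg₁ := by
    rw [hA1]
    calc U₁ᴴ * (U₁ * dg₁ * U₁ᴴ) * U₁ = (U₁ᴴ * U₁) * dg₁ * (U₁ᴴ * U₁) := by noncomm_ring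
      _ = dg₁ := by rw [hU₁a, Matrix.one_mul, Matrix.mul_one]
  have hU₂diag : U₂ᴴ * ((q:ℂ) • ρ₂) * U₂ = dg₂ := by
    rw [hA2]
    calc U₂ᴴ * (U₂ * dg₂ * U₂ᴴ) * U₂ = (U₂ᴴ * U₂) * dg₂ * (U₂ᴴ * U₂) := by noncomm_ring
      _ = dg₂ := by rw [hU₂a, Matrix.one_mul, Matrix.mul_one]
  have hWCW : Wᴴ * CC * W = fromBlocks dg₁ (U₁ᴴ*(a*b)*U₂) (U₂ᴴ*(b*a)*U₁) dg₂ := by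
    rw [hCblocks, hWH, hWdef]
    simp only [fromBlocks_multiply, Matrix.zero_mul, Matrix.mul_zero, add_zero, zero_add]
    rw [← hU₁diag, ← hU₂diag]
  have hdiag : ∀ j, (Wᴴ * CC * W) j j = ((mu j : ℝ) : ℂ) := by
    intro j
    rw [hWCW]
    cases j with
    | inl i => simp [hdg₁def, hmudef]
    | inr i => simp [hdg₂def, hmudef]
  -- Klein
  have hCps : CC.PosSemidef := by rw [hCdef]; exact Matrix.posSemidef_self_mul_conjTranspose M
  have hCh : CC.IsHermitian := hCps.1
  obtain ⟨V, hVa, hVb, hVd⟩ := herm_decomp hCh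
  set lam : n ⊕ n → ℝ := hCh.eigenvalues with hlamdef
  have hlamnn : ∀ i, 0 ≤ lam i := fun i => hCps.eigenvalues_nonneg i
  have hmunn : ∀ j, 0 ≤ mu j := by
    intro j
    cases j with
    | inl i => exact mul_nonneg hp0.le (hρ₁psd.eigenvalues_nonneg i)
    | inr i => exact mul_nonneg hq0.le (hρ₂psd.eigenvalues_nonneg i)
  obtain ⟨hineq, heqCD⟩ := klein CC DD V W lam mu hVa hVb hWa hWb hVd hWD hlamnn hmunn hdiag
  -- bridge 1 : sum over lam = vN ρ
  obtain ⟨Uρ, hUρa, hUρb, hUρd⟩ := herm_decomp hρh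
  have hcharC : CC.charpoly = ρ.charpoly * X ^ (Fintype.card n) := by
    rw [hCdef, _root_.charpoly_mul_comm' M Mᴴ, hMHM, Matrix.charpoly_fromBlocks_zero₁₂, charpoly_zero']
  have hprodC : (∏ i, (X - C ((lam i : ℂ))))
      = (∏ i, (X - C ((hρh.eigenvalues i : ℂ)))) * X ^ (Fintype.card n) := by
    rw [← charpoly_of_udiag CC V lam hVa hVb hVd, hcharC,
      charpoly_of_udiag ρ Uρ _ hUρa hUρb hUρd]
  have hbridge1 : ∑ i, Real.negMulLog (lam i) = ∑ i, Real.negMulLog (hρh.eigenvalues i) :=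
    sum_f_of_charpoly lam _ _ hprodC Real.negMulLog Real.negMulLog_zero
  have hvNρ : vN ρ = ∑ i, Real.negMulLog (hρh.eigenvalues i) := by
    rw [vN, dif_pos hρh]
  have hvN₁ : vN ρ₁ = ∑ i, Real.negMulLog (e₁ i) := by rw [vN, dif_pos h1h]
  have hvN₂ : vN ρ₂ = ∑ i, Real.negMulLog (e₂ i) := by rw [vN, dif_pos h2h]
  -- bridge 2 : sum over mu = RHS
  have hbridge2 : ∑ j, Real.negMulLog (mu j)
      = p * vN ρ₁ + q * vN ρ₂ + (Real.negMulLog p + Real.negMulLog q) := by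
    rw [hmudef, Fintype.sum_sum_type]
    simp only [Sum.elim_inl, Sum.elim_inr]
    have h1 : ∀ i : n, Real.negMulLog (p * e₁ i)
        = p * Real.negMulLog (e₁ i) + e₁ i * Real.negMulLog p := by
      intro i; rw [Real.negMulLog_mul]; ring
    have h2 : ∀ i : n, Real.negMulLog (q * e₂ i)
        = q * Real.negMulLog (e₂ i) + e₂ i * Real.negMulLog q := by
      intro i; rw [Real.negMulLog_mul]; ring
    rw [Finset.sum_congr rfl (fun i _ => h1 i), Finset.sum_congr rfl (fun i _ => h2 i),
      Finset.sum_add_distrib, Finset.sum_add_distrib, ← Finset.mul_sum, ← Finset.mul_sum,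
      ← Finset.sum_mul, ← Finset.sum_mul, hsum₁, hsum₂, hvN₁, hvN₂]
    ring
  have hLHSeq : vN ρ = ∑ i, Real.negMulLog (lam i) := by rw [hvNρ, hbridge1]
  constructor
  · rw [hLHSeq]
    calc ∑ i, Real.negMulLog (lam i) ≤ ∑ j, Real.negMulLog (mu j) := hineq
      _ = p * vN ρ₁ + q * vN ρ₂ + (Real.negMulLog p + Real.negMulLog q) := hbridge2
  · constructor
    · intro hEq
      have hsums : ∑ i, Real.negMulLog (lam i) = ∑ j, Real.negMulLog (mu j) := by
        rw [← hLHSeq, hEq, hbridge2]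
      have hCD := heqCD hsums
      have hab : a * b = 0 := by
        rw [hCblocks, hDdef] at hCD
        have := congrArg Matrix.toBlocks₁₂ hCD
        simpa [Matrix.toBlocks_fromBlocks₁₂] using this
      have hprod : ((p:ℂ) • ρ₁) * ((q:ℂ) • ρ₂) = 0 := by
        rw [← haa, ← hbb]
        calc a * a * (b * b) = a * (a * b) * b := by noncomm_ring
          _ = 0 := by rw [hab]; simp
      have hsmul : ((p:ℂ) * (q:ℂ)) • (ρ₁ * ρ₂) = 0 := by
        rw [← hprod, smul_mul_assoc, mul_smul_comm, smul_smul]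
      rcases smul_eq_zero.1 hsmul with h | h
      · exfalso
        have : (p:ℂ) * (q:ℂ) ≠ 0 := by
          apply mul_ne_zero <;> simp [Complex.ofReal_ne_zero] <;> [exact ne_of_gt hp0; exact ne_of_gt hq0]
        exact this h
      · exact h
    · intro hz
      have hz' : ρ₂ * ρ₁ = 0 := by
        have := congrArg Matrix.conjTranspose hz
        rw [conjTranspose_mul, h1h.eq, h2h.eq] at this
        simpa using this
      have hab : a * b = 0 := by
        apply eq_zero_of_trace_conjTranspose_mul
        have hform : (a*b)ᴴ * (a*b) = b * ((p:ℂ) • ρ₁) * b := by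
          rw [conjTranspose_mul, haher, hbher]
          calc b * a * (a * b) = b * (a * a) * b := by noncomm_ring
            _ = b * ((p:ℂ) • ρ₁) * b := by rw [haa]
        rw [hform, Matrix.trace_mul_cycle]
        have hbp : b * b * ((p:ℂ) • ρ₁) = ((q:ℂ) * (p:ℂ)) • (ρ₂ * ρ₁) := by
          rw [hbb, smul_mul_assoc, mul_smul_comm, smul_smul]
        rw [hbp, hz']
        simp
      have hba : b * a = 0 := by
        rw [← haher, ← hbher, ← conjTranspose_mul, hab]
        simp
      have hCD : CC = DD := by
        rw [hCblocks, hab, hba, hDdef]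
      have hsums : ∑ i, Real.negMulLog (lam i) = ∑ j, Real.negMulLog (mu j) := by
        apply sum_f_of_charpoly lam mu 0 _ Real.negMulLog Real.negMulLog_zero
        rw [pow_zero, mul_one, ← charpoly_of_udiag CC V lam hVa hVb hVd, hCD,
          charpoly_of_udiag DD W mu hWa hWb hWD]
      rw [← hLHSeq] at hsums
      rw [hsums, hbridge2]
end

section
/- For positive semidefinite matrices A ≥ B > 0 (both invertible), log A - log B = ∫_0^∞ [(B + tI)^{-1} - (A + tI)^{-1}] dt, and in particular the integrand is positive semidefinite for each t ≥ 0, so log A ≥ log B. -/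
open scoped ComplexOrder
open Matrix

/-- The logarithm of a Hermitian matrix, defined through the spectral theorem
(junk value `0` on non-Hermitian input). -/
noncomputable def matLog {n : Type*} [Fintype n] [DecidableEq n]
    (A : Matrix n n ℂ) : Matrix n n ℂ :=
  if h : A.IsHermitian then
    (h.eigenvectorUnitary : Matrix n n ℂ) *
      Matrix.diagonal (fun i => (Real.log (h.eigenvalues i) : ℂ)) *
      (star (h.eigenvectorUnitary : Matrix n n ℂ))
  else 0

namespace MatrixLogAux

open MeasureTheory Set Filter

lemma logF_hasDeriv {μ : ℝ} (hμ : 0 < μ) {t : ℝ} (ht : 0 ≤ t) :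
    HasDerivAt (fun s : ℝ => Real.log (1 + s) - Real.log (μ + s))
      (1/(1+t) - 1/(μ+t)) t := by
  have h1 : HasDerivAt (fun s : ℝ => Real.log (1 + s)) (1/(1+t)) t := by
    have := (Real.hasDerivAt_log (by positivity : (1:ℝ) + t ≠ 0)).comp t
      ((hasDerivAt_id t).const_add 1)
    simpa [one_div, Function.comp_def] using this
  have h2 : HasDerivAt (fun s : ℝ => Real.log (μ + s)) (1/(μ+t)) t := by
    have := (Real.hasDerivAt_log (by positivity : μ + t ≠ 0)).comp t
      ((hasDerivAt_id t).const_add μ)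
    simpa [one_div, Function.comp_def] using this
  exact h1.sub h2

lemma logF_tendsto {μ : ℝ} (hμ : 0 < μ) :
    Tendsto (fun s : ℝ => Real.log (1 + s) - Real.log (μ + s)) atTop (nhds 0) := by
  have h1 : Tendsto (fun s : ℝ => (1 - μ) / (μ + s)) atTop (nhds 0) :=
    Tendsto.div_atTop tendsto_const_nhds (tendsto_atTop_add_const_left _ μ tendsto_id)
  have h2 : Tendsto (fun s : ℝ => 1 + (1 - μ) / (μ + s)) atTop (nhds 1) := by
    simpa using h1.const_add 1
  have h3 : Tendsto (fun s : ℝ => Real.log (1 + (1 - μ) / (μ + s))) atTop (nhds 0) := by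
    have := (Real.continuousAt_log one_ne_zero).tendsto.comp h2
    simpa [Function.comp_def] using this
  refine h3.congr' ?_
  filter_upwards [eventually_gt_atTop 0] with s hs
  have hμs : 0 < μ + s := by positivity
  have h1s : 0 < 1 + s := by positivity
  rw [show 1 + (1-μ)/(μ+s) = (1+s)/(μ+s) by field_simp; ring,
    Real.log_div h1s.ne' hμs.ne']

lemma scalar_integrable {μ : ℝ} (hμ : 0 < μ) :
    IntegrableOn (fun t : ℝ => 1/(1+t) - 1/(μ+t)) (Ioi 0) := by
  rcases le_total 1 μ with h | h
  · refine integrableOn_Ioi_deriv_of_nonneg' (fun x hx => logF_hasDeriv hμ hx) ?_ (logF_tendsto hμ)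
    intro x hx
    have hx0 : (0:ℝ) < x := hx
    have : (1:ℝ) + x ≤ μ + x := by linarith
    have := one_div_le_one_div_of_le (by positivity) this
    linarith
  · refine integrableOn_Ioi_deriv_of_nonpos' (fun x hx => logF_hasDeriv hμ hx) ?_ (logF_tendsto hμ)
    intro x hx
    have hx0 : (0:ℝ) < x := hx
    have : μ + x ≤ 1 + x := by linarith
    have := one_div_le_one_div_of_le (by positivity) this
    linarith

lemma scalar_integral {μ : ℝ} (hμ : 0 < μ) :
    ∫ t in Ioi (0:ℝ), (1/(1+t) - 1/(μ+t)) = Real.log μ := by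
  have key : ∫ t in Ioi (0:ℝ), (1/(1+t) - 1/(μ+t))
      = 0 - (Real.log (1+0) - Real.log (μ+0)) := by
    rcases le_total 1 μ with h | h
    · refine integral_Ioi_of_hasDerivAt_of_nonneg' (fun x hx => logF_hasDeriv hμ hx) ?_
        (logF_tendsto hμ)
      intro x hx
      have hx0 : (0:ℝ) < x := hx
      have : (1:ℝ) + x ≤ μ + x := by linarith
      have := one_div_le_one_div_of_le (by positivity) this
      linarith
    · refine integral_Ioi_of_hasDerivAt_of_nonpos' (fun x hx => logF_hasDeriv hμ hx) ?_
        (logF_tendsto hμ)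
      intro x hx
      have hx0 : (0:ℝ) < x := hx
      have : μ + x ≤ 1 + x := by linarith
      have := one_div_le_one_div_of_le (by positivity) this
      linarith
  simpa using key

lemma inv_sub_inv_psd {n : Type*} [Fintype n] [DecidableEq n]
    {A B : Matrix n n ℂ} (hA : A.PosDef) (hB : B.PosDef)
    (hAB : (A - B).PosSemidef) : (B⁻¹ - A⁻¹).PosSemidef := by
  obtain ⟨C, hC⟩ : ∃ C, C = A - B := ⟨A - B, rfl⟩
  rw [← hC] at hAB
  have hAdet : IsUnit A.det := (Matrix.isUnit_iff_isUnit_det A).mp hA.isUnit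
  have hBdet : IsUnit B.det := (Matrix.isUnit_iff_isUnit_det B).mp hB.isUnit
  have e1 : A⁻¹ * C * B⁻¹ = B⁻¹ - A⁻¹ := by
    rw [hC, Matrix.mul_sub, Matrix.sub_mul, Matrix.nonsing_inv_mul A hAdet, Matrix.one_mul,
      Matrix.mul_assoc, Matrix.mul_nonsing_inv B hBdet, Matrix.mul_one]
  have e2 : B⁻¹ * C * A⁻¹ = B⁻¹ - A⁻¹ := by
    rw [hC, Matrix.mul_sub, Matrix.nonsing_inv_mul B hBdet, Matrix.sub_mul,
      Matrix.mul_assoc, Matrix.mul_nonsing_inv A hAdet, Matrix.mul_one, Matrix.one_mul]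
  have key : B⁻¹ - A⁻¹ = A⁻¹ * C * A⁻¹ + A⁻¹ * C * B⁻¹ * (C * A⁻¹) := by
    rw [e1, Matrix.sub_mul, ← Matrix.mul_assoc B⁻¹ C A⁻¹, ← Matrix.mul_assoc A⁻¹ C A⁻¹, e2]
    abel
  have hAinvH : A⁻¹ᴴ = A⁻¹ := hA.inv.isHermitian
  have t1 : (A⁻¹ * C * A⁻¹).PosSemidef := by
    have := hAB.conjTranspose_mul_mul_same A⁻¹
    rwa [hAinvH] at this
  have t2 : (A⁻¹ * C * B⁻¹ * (C * A⁻¹)).PosSemidef := by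
    have := hB.inv.posSemidef.conjTranspose_mul_mul_same (C * A⁻¹)
    have hX : (C * A⁻¹)ᴴ = A⁻¹ * C := by
      rw [Matrix.conjTranspose_mul, hAinvH, hAB.isHermitian.eq]
    rwa [hX] at this
  rw [key]
  exact t1.add t2

lemma matLog_entry_integral {n : Type*} [Fintype n] [DecidableEq n]
    {M : Matrix n n ℂ} (hM : M.PosDef) (i j : n) :
    IntegrableOn
      (fun t : ℝ => ((1/(1+t) : ℂ) • (1 : Matrix n n ℂ) - (M + (t:ℂ) • 1)⁻¹) i j) (Ioi 0) ∧
    matLog M i j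
      = ∫ t in Ioi (0:ℝ), ((1/(1+t) : ℂ) • (1 : Matrix n n ℂ) - (M + (t:ℂ) • 1)⁻¹) i j := by
  have hH : M.IsHermitian := hM.isHermitian
  set U : Matrix n n ℂ := (hH.eigenvectorUnitary : Matrix n n ℂ) with hUdef
  set μ : n → ℝ := hH.eigenvalues with hμdef
  have hμpos : ∀ k, 0 < μ k := fun k => hM.eigenvalues_pos k
  have hUs : U * star U = 1 := Matrix.mem_unitaryGroup_iff.mp hH.eigenvectorUnitary.2
  have hsU : star U * U = 1 := Matrix.mem_unitaryGroup_iff'.mp hH.eigenvectorUnitary.2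
  have entry : ∀ d : n → ℂ, (U * diagonal d * star U) i j
      = ∑ k, U i k * d k * star (U j k) := by
    intro d
    rw [Matrix.mul_apply]
    simp [Matrix.mul_diagonal, Matrix.star_apply]
  have hsmul : ∀ c : ℂ, c • (1 : Matrix n n ℂ) = U * Matrix.diagonal (fun _ => c) * star U := by
    intro c
    rw [← Matrix.smul_one_eq_diagonal, Matrix.mul_smul, Matrix.mul_one, Matrix.smul_mul, hUs]
  have resolvent : ∀ t : ℝ, 0 < t → (M + (t:ℂ) • 1)⁻¹
      = U * diagonal (fun k => (((μ k + t)⁻¹ : ℝ) : ℂ)) * star U := by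
    intro t ht
    have hMt : M + (t:ℂ) • 1 = U * diagonal (fun k => (((μ k + t) : ℝ) : ℂ)) * star U := by
      conv_lhs => rw [hH.spectral_theorem, Unitary.conjStarAlgAut_apply, ← hUdef, hsmul (t:ℂ)]
      rw [← Matrix.add_mul, ← Matrix.mul_add, Matrix.diagonal_add]
      congr 1
      · congr 1
        funext k
        simp [Function.comp]
        rfl
    have hinv : (U * diagonal (fun k => (((μ k + t)⁻¹ : ℝ) : ℂ)) * star U)
        * (M + (t:ℂ) • 1) = 1 := by
      rw [hMt]
      simp only [Matrix.mul_assoc]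
      rw [← Matrix.mul_assoc (star U) U, hsU, Matrix.one_mul,
        ← Matrix.mul_assoc (Matrix.diagonal _) (Matrix.diagonal _),
        Matrix.diagonal_mul_diagonal]
      have : (fun k => (((μ k + t)⁻¹ : ℝ) : ℂ) * (((μ k + t) : ℝ) : ℂ)) = fun _ => (1:ℂ) := by
        funext k
        have h0 : (μ k + t) ≠ 0 := by have := hμpos k; positivity
        rw [← Complex.ofReal_mul, inv_mul_cancel₀ h0, Complex.ofReal_one]
      rw [this, Matrix.diagonal_one, Matrix.one_mul, hUs]
    exact Matrix.inv_eq_left_inv hinv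
  have hlog : matLog M i j = ∑ k, U i k * ((Real.log (μ k) : ℂ)) * star (U j k) := by
    rw [matLog, dif_pos hH]
    exact entry _
  have hpt : ∀ t ∈ Ioi (0:ℝ), ((1/(1+t) : ℂ) • (1 : Matrix n n ℂ) - (M + (t:ℂ) • 1)⁻¹) i j
      = ∑ k, U i k * (((1/(1+t) - 1/(μ k + t)) : ℝ) : ℂ) * star (U j k) := by
    intro t ht
    have ht' : (0:ℝ) < t := ht
    rw [resolvent t ht', hsmul, Matrix.sub_apply, entry, entry, ← Finset.sum_sub_distrib]
    refine Finset.sum_congr rfl fun k _ => ?_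
    have h1 : (1:ℝ) + t ≠ 0 := by positivity
    have h2 : μ k + t ≠ 0 := by have := hμpos k; positivity
    push_cast
    ring
  have hint : ∀ k : n, IntegrableOn
      (fun t : ℝ => U i k * (((1/(1+t) - 1/(μ k + t)) : ℝ) : ℂ) * star (U j k)) (Ioi 0) :=
    fun k => (((scalar_integrable (hμpos k)).ofReal).const_mul _).mul_const _
  have hintsum : IntegrableOn
      (fun t : ℝ => ∑ k, U i k * (((1/(1+t) - 1/(μ k + t)) : ℝ) : ℂ) * star (U j k)) (Ioi 0) :=
    integrable_finset_sum _ fun k _ => hint k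
  constructor
  · refine hintsum.congr ?_
    filter_upwards [ae_restrict_mem measurableSet_Ioi] with t ht
    exact (hpt t ht).symm
  · rw [hlog]
    have hterm : ∀ k ∈ Finset.univ (α := n), U i k * ((Real.log (μ k) : ℂ)) * star (U j k)
        = ∫ t in Ioi (0:ℝ), U i k * (((1/(1+t) - 1/(μ k + t)) : ℝ) : ℂ) * star (U j k) := by
      intro k _
      have : ((Real.log (μ k) : ℂ))
          = ∫ t in Ioi (0:ℝ), (((1/(1+t) - 1/(μ k + t)) : ℝ) : ℂ) := by
        rw [← scalar_integral (hμpos k)]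
        exact (integral_ofReal).symm
      rw [this, ← integral_const_mul, ← integral_mul_const]
    rw [Finset.sum_congr rfl hterm, ← integral_finset_sum _ fun k _ => hint k]
    refine (setIntegral_congr_fun measurableSet_Ioi fun t ht => ?_).symm
    exact hpt t ht

lemma matLog_isHermitian {n : Type*} [Fintype n] [DecidableEq n]
    {M : Matrix n n ℂ} (hH : M.IsHermitian) : (matLog M).IsHermitian := by
  rw [matLog, dif_pos hH]
  have hd : (Matrix.diagonal fun k => (Real.log (hH.eigenvalues k) : ℂ)).IsHermitian := by
    rw [Matrix.IsHermitian, Matrix.diagonal_conjTranspose]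
    have hst : (star fun k : n => ((Real.log (hH.eigenvalues k) : ℂ)))
        = fun k : n => ((Real.log (hH.eigenvalues k) : ℂ)) := by
      funext k
      simp
    rw [hst]
  show _ᴴ = _
  rw [Matrix.conjTranspose_mul, Matrix.conjTranspose_mul, hd.eq]
  simp only [Matrix.star_eq_conjTranspose, Matrix.conjTranspose_conjTranspose,
    Matrix.mul_assoc]

end MatrixLogAux

open MatrixLogAux MeasureTheory Set

/-- For matrices `A ≥ B > 0`, one has the integral representation
`log A - log B = ∫_0^∞ [(B + tI)⁻¹ - (A + tI)⁻¹] dt` (stated entrywise); moreover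
the integrand is positive semidefinite for every `t ≥ 0`, and consequently
`log A ≥ log B` (operator monotonicity of the logarithm). -/
theorem matrix_log_integral_and_monotone
    {n : Type*} [Fintype n] [DecidableEq n]
    (A B : Matrix n n ℂ) (hB : B.PosDef) (hAB : (A - B).PosSemidef) :
    (∀ t : ℝ, 0 ≤ t →
        ((B + (t : ℂ) • 1)⁻¹ - (A + (t : ℂ) • 1)⁻¹).PosSemidef) ∧
      (∀ i j, (matLog A - matLog B) i j =
        ∫ t in Set.Ioi (0 : ℝ), ((B + (t : ℂ) • 1)⁻¹ - (A + (t : ℂ) • 1)⁻¹) i j) ∧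
      (matLog A - matLog B).PosSemidef := by
  have hA : A.PosDef := by
    have h := hB.add_posSemidef hAB
    rwa [add_sub_cancel] at h
  have part1 : ∀ t : ℝ, 0 ≤ t →
      ((B + (t:ℂ) • 1)⁻¹ - (A + (t:ℂ) • 1)⁻¹).PosSemidef := by
    intro t ht
    have hs : ((t:ℂ) • (1 : Matrix n n ℂ)).PosSemidef := by
      rw [Matrix.smul_one_eq_diagonal]
      exact Matrix.PosSemidef.diagonal fun k => Complex.zero_le_real.mpr ht
    have hBt : (B + (t:ℂ) • 1).PosDef := hB.add_posSemidef hs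
    have hAt : (A + (t:ℂ) • 1).PosDef := by
      have h2 := hBt.add_posSemidef hAB
      have e : B + (t:ℂ) • 1 + (A - B) = A + (t:ℂ) • 1 := by abel
      rwa [e] at h2
    have e2 : A + (t:ℂ) • 1 - (B + (t:ℂ) • 1) = A - B := by abel
    exact inv_sub_inv_psd hAt hBt (by rwa [e2])
  have hfun : ∀ i j, (fun t : ℝ =>
        ((1/(1+t) : ℂ) • (1 : Matrix n n ℂ) - (A + (t:ℂ) • 1)⁻¹) i j
        - ((1/(1+t) : ℂ) • (1 : Matrix n n ℂ) - (B + (t:ℂ) • 1)⁻¹) i j)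
      = fun t : ℝ => ((B + (t:ℂ) • 1)⁻¹ - (A + (t:ℂ) • 1)⁻¹) i j := by
    intro i j
    funext t
    simp only [Matrix.sub_apply]
    ring
  have hgint : ∀ i j, IntegrableOn
      (fun t : ℝ => ((B + (t:ℂ) • 1)⁻¹ - (A + (t:ℂ) • 1)⁻¹) i j) (Ioi 0) := by
    intro i j
    rw [← hfun i j]
    exact (matLog_entry_integral hA i j).1.sub (matLog_entry_integral hB i j).1
  have part2 : ∀ i j, (matLog A - matLog B) i j
      = ∫ t in Ioi (0:ℝ), ((B + (t:ℂ) • 1)⁻¹ - (A + (t:ℂ) • 1)⁻¹) i j := by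
    intro i j
    rw [Matrix.sub_apply, (matLog_entry_integral hA i j).2, (matLog_entry_integral hB i j).2,
      ← integral_sub (matLog_entry_integral hA i j).1 (matLog_entry_integral hB i j).1]
    exact congrArg _ (hfun i j)
  refine ⟨part1, part2, ?_⟩
  rw [Matrix.posSemidef_iff_dotProduct_mulVec]
  constructor
  · exact (matLog_isHermitian hA.isHermitian).sub (matLog_isHermitian hB.isHermitian)
  · intro x
    have hgx : ∀ i j, IntegrableOn
        (fun t : ℝ => ((B + (t:ℂ) • 1)⁻¹ - (A + (t:ℂ) • 1)⁻¹) i j * x j) (Ioi 0) :=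
      fun i j => (hgint i j).mul_const _
    have hrowfun : ∀ i, (fun t : ℝ => (((B + (t:ℂ) • 1)⁻¹ - (A + (t:ℂ) • 1)⁻¹) *ᵥ x) i)
        = fun t : ℝ => ∑ j, ((B + (t:ℂ) • 1)⁻¹ - (A + (t:ℂ) • 1)⁻¹) i j * x j := by
      intro i
      funext t
      simp [Matrix.mulVec, dotProduct]
    have hrow : ∀ i, IntegrableOn
        (fun t : ℝ => (((B + (t:ℂ) • 1)⁻¹ - (A + (t:ℂ) • 1)⁻¹) *ᵥ x) i) (Ioi 0) := by
      intro i
      rw [hrowfun i]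
      exact integrable_finset_sum _ fun j _ => hgx i j
    have hentry : ∀ i, ((matLog A - matLog B) *ᵥ x) i
        = ∫ t in Ioi (0:ℝ), (((B + (t:ℂ) • 1)⁻¹ - (A + (t:ℂ) • 1)⁻¹) *ᵥ x) i := by
      intro i
      have h1 : ((matLog A - matLog B) *ᵥ x) i = ∑ j, (matLog A - matLog B) i j * x j := by
        simp [Matrix.mulVec, dotProduct]
      rw [h1]
      have h2 : ∀ j ∈ Finset.univ (α := n), (matLog A - matLog B) i j * x j
          = ∫ t in Ioi (0:ℝ), ((B + (t:ℂ) • 1)⁻¹ - (A + (t:ℂ) • 1)⁻¹) i j * x j := by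
        intro j _
        rw [part2 i j, ← integral_mul_const]
      rw [Finset.sum_congr rfl h2, ← integral_finset_sum _ fun j _ => hgx i j, hrowfun i]
    have hq : star x ⬝ᵥ ((matLog A - matLog B) *ᵥ x)
        = ∫ t in Ioi (0:ℝ), star x ⬝ᵥ ((((B + (t:ℂ) • 1)⁻¹ - (A + (t:ℂ) • 1)⁻¹)) *ᵥ x) := by
      have hdp : ∀ (P : Matrix n n ℂ), star x ⬝ᵥ (P *ᵥ x) = ∑ i, star x i * (P *ᵥ x) i := by
        intro P
        simp [dotProduct]
      rw [hdp]
      have h3 : ∀ i ∈ Finset.univ (α := n), star x i * ((matLog A - matLog B) *ᵥ x) i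
          = ∫ t in Ioi (0:ℝ), star x i
              * (((B + (t:ℂ) • 1)⁻¹ - (A + (t:ℂ) • 1)⁻¹) *ᵥ x) i := by
        intro i _
        rw [hentry i, ← integral_const_mul]
      rw [Finset.sum_congr rfl h3,
        ← integral_finset_sum _ fun i _ => (hrow i).const_mul (star x i)]
      refine congrArg _ ?_
      funext t
      exact (hdp _).symm
    rw [hq]
    have hptnn : ∀ t ∈ Ioi (0:ℝ),
        0 ≤ star x ⬝ᵥ ((((B + (t:ℂ) • 1)⁻¹ - (A + (t:ℂ) • 1)⁻¹)) *ᵥ x) :=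
      fun t ht => (part1 t (le_of_lt ht)).dotProduct_mulVec_nonneg x
    have hHint : IntegrableOn
        (fun t : ℝ => star x ⬝ᵥ ((((B + (t:ℂ) • 1)⁻¹ - (A + (t:ℂ) • 1)⁻¹)) *ᵥ x)) (Ioi 0) := by
      have h4 : (fun t : ℝ => star x ⬝ᵥ ((((B + (t:ℂ) • 1)⁻¹ - (A + (t:ℂ) • 1)⁻¹)) *ᵥ x))
          = fun t : ℝ => ∑ i, star x i * (((B + (t:ℂ) • 1)⁻¹ - (A + (t:ℂ) • 1)⁻¹) *ᵥ x) i := by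
        funext t
        simp [dotProduct]
      rw [h4]
      exact integrable_finset_sum _ fun i _ => (hrow i).const_mul (star x i)
    rw [Complex.le_def]
    constructor
    · have := integral_re hHint
      simp only [RCLike.re_to_complex] at this
      rw [Complex.zero_re, ← this]
      refine setIntegral_nonneg measurableSet_Ioi fun t ht => ?_
      exact (Complex.le_def.mp (hptnn t ht)).1
    · have := integral_im hHint
      simp only [RCLike.im_to_complex] at this
      rw [Complex.zero_im, ← this]
      have h5 : ∫ t in Ioi (0:ℝ),
          (star x ⬝ᵥ ((((B + (t:ℂ) • 1)⁻¹ - (A + (t:ℂ) • 1)⁻¹)) *ᵥ x)).im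
          = ∫ t in Ioi (0:ℝ), (0:ℝ) :=
        setIntegral_congr_fun measurableSet_Ioi fun t ht =>
          ((Complex.le_def.mp (hptnn t ht)).2).symm
      rw [h5]
      simp
end

section
/- Let ρ_1 be a density matrix supported on a subspace V, and ρ_2 another density matrix, and let k > 0. If (ρ_1 + tI)^{-1} = (ρ_1 + k ρ_2 + tI)^{-1} when both sides are compressed to V, for all t > 0, then ρ_2 is supported on the orthogonal complement of V (i.e., P_V ρ_2 P_V = 0 and P_V ρ_2 (I - P_V) = 0, equivalently ρ_1 ρ_2 = 0). -/
open scoped ComplexOrder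
open Matrix

private lemma aux_psd_smul {n : Type*} [Fintype n] {M : Matrix n n ℂ} (hM : M.PosSemidef)
    {c : ℝ} (hc : 0 ≤ c) : ((c : ℂ) • M).PosSemidef := by
  constructor
  · unfold Matrix.IsHermitian
    rw [conjTranspose_smul, hM.1.eq]
    simp [Complex.conj_ofReal]
  · intro x
    exact (hM.smul hc).2 x

private lemma aux_pd {n : Type*} [Fintype n] [DecidableEq n] {M : Matrix n n ℂ}
    (hM : M.PosSemidef) {t : ℝ} (ht : 0 < t) : (M + (t : ℂ) • 1).PosDef := by
  refine Matrix.PosDef.posSemidef_add hM ?_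
  rw [smul_one_eq_diagonal]
  exact .diagonal fun _ => Complex.zero_lt_real.2 ht


/-- Let `ρ₁` be a density matrix whose support is exactly the range of
the orthogonal projection `P` (onto a subspace `V`), let `ρ₂` be another density
matrix and `k > 0`.  If the compressions to `V` of `(ρ₁ + tI)⁻¹` and
`(ρ₁ + k ρ₂ + tI)⁻¹` agree for all `t > 0`, then `ρ₂` is supported on the orthogonal
complement of `V`: `P ρ₂ P = 0`, `P ρ₂ (1 - P) = 0`, equivalently `ρ₁ ρ₂ = 0`. -/
theorem compressed_resolvent_forces_orthogonal_support
    {n : Type*} [Fintype n] [DecidableEq n]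
    (ρ₁ ρ₂ : Matrix n n ℂ) (h₁ : ρ₁.PosSemidef ∧ ρ₁.trace = 1)
    (h₂ : ρ₂.PosSemidef ∧ ρ₂.trace = 1)
    (P : Matrix n n ℂ) (hP : P.IsHermitian) (hP2 : P * P = P)
    -- the support of ρ₁ is contained in V = range P ...
    (hsupp₁ : ρ₁ * P = ρ₁)
    -- ... and V is contained in the support of ρ₁ (P is the support projection)
    (hsupp₂ : ∀ v : n → ℂ, ρ₁ *ᵥ v = 0 → P *ᵥ v = 0)
    (k : ℝ) (hk : 0 < k)
    (hres : ∀ t : ℝ, 0 < t →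
      P * (ρ₁ + (t : ℂ) • 1)⁻¹ * P
        = P * (ρ₁ + (k : ℂ) • ρ₂ + (t : ℂ) • 1)⁻¹ * P) :
    P * ρ₂ * P = 0 ∧ P * ρ₂ * (1 - P) = 0 ∧ ρ₁ * ρ₂ = 0 := by
  obtain ⟨hρ₁, -⟩ := h₁
  obtain ⟨hρ₂, -⟩ := h₂
  have hσ : (ρ₁ + (k : ℂ) • ρ₂).PosSemidef := hρ₁.add (aux_psd_smul hρ₂ hk.le)
  have hkc : (k : ℂ) ≠ 0 := by
    simpa using (Complex.zero_lt_real.2 hk).ne'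
  -- Step 1: for t > 0, P * A⁻¹ * ρ₂ * B⁻¹ * P = 0
  have key : ∀ t : ℝ, 0 < t →
      P * (ρ₁ + (t : ℂ) • 1)⁻¹ * ρ₂ * (ρ₁ + (k : ℂ) • ρ₂ + (t : ℂ) • 1)⁻¹ * P = 0 := by
    intro t ht
    set A := ρ₁ + (t : ℂ) • 1 with hA
    set B := ρ₁ + (k : ℂ) • ρ₂ + (t : ℂ) • 1 with hB
    have hAd : IsUnit A.det := isUnit_iff_ne_zero.2 (aux_pd hρ₁ ht).det_pos.ne'
    have hBd : IsUnit B.det := isUnit_iff_ne_zero.2 (aux_pd hσ ht).det_pos.ne'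
    have hBA : B - A = (k : ℂ) • ρ₂ := by rw [hA, hB]; abel
    have hdiff : A⁻¹ - B⁻¹ = (k : ℂ) • (A⁻¹ * ρ₂ * B⁻¹) := by
      have : A⁻¹ * (B - A) * B⁻¹ = A⁻¹ - B⁻¹ := by
        rw [Matrix.mul_sub, Matrix.sub_mul, Matrix.mul_assoc,
          Matrix.mul_nonsing_inv _ hBd, Matrix.nonsing_inv_mul _ hAd,
          Matrix.mul_one, Matrix.one_mul]
      rw [← this, hBA, Matrix.mul_smul, Matrix.smul_mul]
    have h0 : P * (A⁻¹ - B⁻¹) * P = 0 := by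
      rw [Matrix.mul_sub, Matrix.sub_mul, hres t ht, sub_self]
    rw [hdiff] at h0
    have : (k : ℂ) • (P * (A⁻¹ * ρ₂ * B⁻¹) * P) = 0 := by
      rw [← h0, Matrix.mul_smul, Matrix.smul_mul]
    have h0' := (smul_eq_zero.mp this).resolve_left hkc
    calc P * A⁻¹ * ρ₂ * B⁻¹ * P = P * (A⁻¹ * ρ₂ * B⁻¹) * P := by
          simp only [Matrix.mul_assoc]
      _ = 0 := h0'
  -- Step 2: reparametrised function
  set f : ℝ → Matrix n n ℂ := fun s =>
    P * ((s : ℂ) • ρ₁ + 1)⁻¹ * ρ₂ * ((s : ℂ) • (ρ₁ + (k : ℂ) • ρ₂) + 1)⁻¹ * P with hf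
  have hfzero : ∀ s ∈ Set.Ioi (0:ℝ), f s = 0 := by
    intro s hs
    have hs' : (0:ℝ) < s := hs
    have hsc : (s : ℂ) ≠ 0 := by simpa using (Complex.zero_lt_real.2 hs').ne'
    have := invertibleOfNonzero hsc
    set t : ℝ := s⁻¹ with htdef
    have ht : 0 < t := inv_pos.2 hs'
    have hst : (s : ℂ) * (t : ℂ) = 1 := by
      rw [← Complex.ofReal_mul, mul_inv_cancel₀ hs'.ne', Complex.ofReal_one]
    have e : ∀ M : Matrix n n ℂ, (s : ℂ) • M + 1 = (s : ℂ) • (M + (t : ℂ) • 1) := by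
      intro M
      rw [smul_add, smul_smul, hst, one_smul]
    have e1 := e ρ₁
    have e2 := e (ρ₁ + (k : ℂ) • ρ₂)
    have hAd : IsUnit (ρ₁ + (t : ℂ) • 1).det := isUnit_iff_ne_zero.2 (aux_pd hρ₁ ht).det_pos.ne'
    have hBd : IsUnit (ρ₁ + (k : ℂ) • ρ₂ + (t : ℂ) • 1).det :=
      isUnit_iff_ne_zero.2 (aux_pd hσ ht).det_pos.ne'
    have i1 : ((s : ℂ) • (ρ₁ + (t : ℂ) • 1))⁻¹ = ⅟(s : ℂ) • (ρ₁ + (t : ℂ) • 1)⁻¹ :=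
      Matrix.inv_smul _ _ hAd
    have i2 : ((s : ℂ) • (ρ₁ + (k : ℂ) • ρ₂ + (t : ℂ) • 1))⁻¹
        = ⅟(s : ℂ) • (ρ₁ + (k : ℂ) • ρ₂ + (t : ℂ) • 1)⁻¹ :=
      Matrix.inv_smul _ _ hBd
    rw [hf]
    dsimp only
    rw [e1, e2, i1, i2]
    simp only [Matrix.mul_smul, Matrix.smul_mul, smul_smul]
    rw [key t ht, smul_zero]
  -- continuity of f at 0
  have hcont : ContinuousAt f 0 := by
    have hC : Continuous fun s : ℝ => ((s : ℂ) • ρ₁ + 1 : Matrix n n ℂ) :=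
      (Complex.continuous_ofReal.smul continuous_const).add continuous_const
    have hD : Continuous fun s : ℝ =>
        ((s : ℂ) • (ρ₁ + (k : ℂ) • ρ₂) + 1 : Matrix n n ℂ) :=
      (Complex.continuous_ofReal.smul continuous_const).add continuous_const
    have hdetC : ContinuousAt (fun s : ℝ => (((s : ℂ) • ρ₁ + 1 : Matrix n n ℂ).det)⁻¹) 0 := by
      refine (hC.matrix_det.continuousAt).inv₀ ?_
      simp
    have hdetD : ContinuousAt
        (fun s : ℝ => (((s : ℂ) • (ρ₁ + (k : ℂ) • ρ₂) + 1 : Matrix n n ℂ).det)⁻¹) 0 := by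
      refine (hD.matrix_det.continuousAt).inv₀ ?_
      simp
    have hfeq : f = fun s : ℝ =>
        P * ((((s : ℂ) • ρ₁ + 1 : Matrix n n ℂ).det)⁻¹ •
              ((s : ℂ) • ρ₁ + 1 : Matrix n n ℂ).adjugate) * ρ₂ *
          ((((s : ℂ) • (ρ₁ + (k : ℂ) • ρ₂) + 1 : Matrix n n ℂ).det)⁻¹ •
              ((s : ℂ) • (ρ₁ + (k : ℂ) • ρ₂) + 1 : Matrix n n ℂ).adjugate) * P := by
      funext s
      rw [hf]
      simp only [Matrix.inv_def, Ring.inverse_eq_inv]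
    rw [hfeq]
    exact ((((continuousAt_const.mul
        (hdetC.smul hC.matrix_adjugate.continuousAt)).mul continuousAt_const).mul
        (hdetD.smul hD.matrix_adjugate.continuousAt)).mul continuousAt_const)
  -- take the limit s → 0⁺
  have hf0 : f 0 = P * ρ₂ * P := by
    rw [hf]
    simp
  have hPρP : P * ρ₂ * P = 0 := by
    have h1 : Filter.Tendsto f (nhdsWithin 0 (Set.Ioi 0)) (nhds (f 0)) :=
      hcont.continuousWithinAt.tendsto
    have h2 : Filter.Tendsto f (nhdsWithin 0 (Set.Ioi 0)) (nhds 0) := by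
      refine Filter.Tendsto.congr' ?_ tendsto_const_nhds
      exact (eventually_mem_nhdsWithin.mono fun s hs => (hfzero s hs).symm)
    rw [← hf0, tendsto_nhds_unique h1 h2]
  -- Step 3: deduce the rest from positivity
  obtain ⟨Bm, hBm⟩ : ∃ Bm : Matrix n n ℂ, ρ₂ = Bmᴴ * Bm := by
    open scoped MatrixOrder Matrix.Norms.L2Operator in
    exact CStarAlgebra.nonneg_iff_eq_star_mul_self.mp hρ₂.nonneg
  have hBP : Bm * P = 0 := by
    rw [← Matrix.conjTranspose_mul_self_eq_zero]
    calc (Bm * P)ᴴ * (Bm * P) = P * (Bmᴴ * Bm) * P := by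
          rw [Matrix.conjTranspose_mul, hP.eq]
          simp only [Matrix.mul_assoc]
      _ = 0 := by rw [← hBm, hPρP]
  have hρ₂P : ρ₂ * P = 0 := by
    rw [hBm, Matrix.mul_assoc, hBP, Matrix.mul_zero]
  have hPρ₂ : P * ρ₂ = 0 := by
    have := congrArg Matrix.conjTranspose hρ₂P
    rwa [Matrix.conjTranspose_mul, hP.eq, hρ₂.1.eq, Matrix.conjTranspose_zero] at this
  refine ⟨hPρP, ?_, ?_⟩
  · rw [hPρ₂, Matrix.zero_mul]
  · rw [← hsupp₁, Matrix.mul_assoc, hPρ₂, Matrix.mul_zero]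
end
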